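/- arXiv:1201.6620 — 4 statements merged into one kernel-verified Lean document; each statement's English description precedes it below -/
import Mathlib

section
/- Let T ∈ ℝ and c > 0. If R : (−∞, T) → ℝ is differentiable and satisfies R′(t) ≥ c·R(t)² for every t < T, then R(t) ≥ 0 for every t < T. -/
/-- If `R` is differentiable on `(-∞, T)` and satisfies `R' ≥ c * R²` there (with `c > 0`),
then `R` is nonnegative on `(-∞, T)`. -/
theorem ancient_riccati_nonneg (T c : ℝ) (hc : 0 < c) (R : ℝ → ℝ)
    (hdiff : ∀ t < T, DifferentiableAt ℝ R t)
    (hineq : ∀ t < T, c * (R t) ^ 2 ≤ deriv R t) :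
    ∀ t < T, 0 ≤ R t := by
  intro t₀ ht₀
  by_contra hneg
  push_neg at hneg
  -- monotonicity: for s ≤ t₀, R s ≤ R t₀
  have hmono : ∀ s ≤ t₀, R s ≤ R t₀ := by
    intro s hs
    have key := Convex.mul_sub_le_image_sub_of_le_deriv (C := 0) (convex_Iio T)
      (fun x hx => (hdiff x hx).continuousAt.continuousWithinAt)
      (by
        rw [interior_Iio]
        exact fun x hx => (hdiff x hx).differentiableWithinAt)
      (by
        intro x hx
        rw [interior_Iio] at hx
        have h1 := hineq x hx
        have h2 : (0:ℝ) ≤ c * (R x) ^ 2 := by positivity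
        linarith)
      s (show s ∈ Set.Iio T from lt_of_le_of_lt hs ht₀) t₀ ht₀ hs
    nlinarith [key]
  have hRneg : ∀ s ≤ t₀, R s < 0 := fun s hs => lt_of_le_of_lt (hmono s hs) hneg
  set g : ℝ → ℝ := fun t => -(R t)⁻¹ with hg
  have hgpos : ∀ s ≤ t₀, 0 < g s := by
    intro s hs
    have h := hRneg s hs
    simp only [hg]
    rw [← inv_neg]
    exact inv_pos.2 (by linarith)
  set s₀ : ℝ := t₀ - (g t₀ / c + 1) with hs₀
  have hs₀lt : s₀ < t₀ := by
    have h := hgpos t₀ le_rfl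
    have : 0 < g t₀ / c + 1 := by positivity
    simp only [hs₀]; linarith
  have hgdiff : ∀ u ∈ Set.Icc s₀ t₀, DifferentiableAt ℝ g u := by
    intro u hu
    have huT : u < T := lt_of_le_of_lt hu.2 ht₀
    exact ((hdiff u huT).inv (ne_of_lt (hRneg u hu.2))).neg
  have hgderiv : ∀ u ∈ Set.Ioo s₀ t₀, c ≤ deriv g u := by
    intro u hu
    have huT : u < T := lt_trans hu.2 ht₀
    have hRu : R u ≠ 0 := ne_of_lt (hRneg u hu.2.le)
    have hd : deriv g u = deriv R u / (R u) ^ 2 := by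
      have : deriv (fun t => (R t)⁻¹) u = -deriv R u / (R u) ^ 2 :=
        deriv_inv'' (hdiff u huT) hRu
      have hneg' : deriv g u = -deriv (fun t => (R t)⁻¹) u := by
        simp only [hg]
        rw [deriv.fun_neg]
      rw [hneg', this]; ring
    rw [hd, le_div_iff₀ (by positivity : (0:ℝ) < (R u) ^ 2)]
    have := hineq u huT
    linarith
  have key := Convex.mul_sub_le_image_sub_of_le_deriv (C := c) (convex_Icc s₀ t₀)
    (fun x hx => (hgdiff x hx).continuousAt.continuousWithinAt)
    (by
      rw [interior_Icc]
      exact fun x hx => (hgdiff x (Set.Ioo_subset_Icc_self hx)).differentiableWithinAt)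
    (by rw [interior_Icc]; exact hgderiv)
    s₀ (Set.left_mem_Icc.2 hs₀lt.le) t₀ (Set.right_mem_Icc.2 hs₀lt.le) hs₀lt.le
  have h1 : 0 < g s₀ := hgpos s₀ hs₀lt.le
  have h2 : t₀ - s₀ = g t₀ / c + 1 := by simp [hs₀]
  have h3 : c * (g t₀ / c + 1) = g t₀ + c := by field_simp
  rw [h2, h3] at key
  linarith
end

section
/- For every ε ∈ (0,1) there exists a differentiable function x : [0, ∞) → ℝ such that x(0) = 1 + ε, x′(y) = F(x(y), y) for all y > 0, x is strictly decreasing, and h(y) ≤ x(y) ≤ 1 + ε for all y ≥ 0. -/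
/-- The right-hand side of the trajectory ODE `dx/dy = F(x,y)` for rotationally symmetric
gradient steady ρ-Einstein solitons (Case 1, `ρ < 1/(2m)`). -/
noncomputable def einsteinF (m ρ x y : ℝ) : ℝ :=
  ((m - 1) * (1 - m * ρ) * (1 - x ^ 2) - x * y) /
    (-(m * (m - 1) * (1 - (m + 1) * ρ) * (1 - x ^ 2)) + (1 + m - 4 * m * ρ) * x * y)

/-- The lower barrier `h(y)`, the zero locus of the numerator of `F`. -/
noncomputable def einsteinH (m ρ y : ℝ) : ℝ :=
  (-y + Real.sqrt (y ^ 2 + 4 * (m - 1) ^ 2 * (1 - m * ρ) ^ 2)) / (2 * (m - 1) * (1 - m * ρ))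

open Set Filter Real Topology

namespace EinsteinAux

/-- numerator -/
def NN (a x y : ℝ) : ℝ := a * (1 - x ^ 2) - x * y
/-- denominator -/
def DD (b c x y : ℝ) : ℝ := -(b * (1 - x ^ 2)) + c * x * y
/-- the field -/
noncomputable def FF (a b c x y : ℝ) : ℝ := NN a x y / DD b c x y
/-- the barrier -/
noncomputable def HH (a y : ℝ) : ℝ := (-y + Real.sqrt (y ^ 2 + 4 * a ^ 2)) / (2 * a)

variable {a b c : ℝ}

lemma sq_sqrt' (a y : ℝ) (ha : 0 < a) :
    Real.sqrt (y ^ 2 + 4 * a ^ 2) ^ 2 = y ^ 2 + 4 * a ^ 2 :=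
  Real.sq_sqrt (by positivity)

lemma lt_sqrt' (a y : ℝ) (ha : 0 < a) : y < Real.sqrt (y ^ 2 + 4 * a ^ 2) := by
  have h1 : |y| < Real.sqrt (y ^ 2 + 4 * a ^ 2) := by
    rw [← Real.sqrt_sq_eq_abs]
    exact Real.sqrt_lt_sqrt (sq_nonneg y) (by nlinarith)
  exact lt_of_le_of_lt (le_abs_self y) h1

lemma sqrt_pos' (a y : ℝ) (ha : 0 < a) : 0 < Real.sqrt (y ^ 2 + 4 * a ^ 2) :=
  Real.sqrt_pos.mpr (by positivity)

lemma HH_pos (ha : 0 < a) (y : ℝ) : 0 < HH a y := by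
  have := lt_sqrt' a y ha
  exact div_pos (by linarith) (by positivity)

lemma NN_atH (ha : 0 < a) (y : ℝ) : NN a (HH a y) y = 0 := by
  have hs := sq_sqrt' a y ha
  unfold NN HH
  field_simp
  rw [show y ^ 2 + a ^ 2 * 4 = y ^ 2 + 4 * a ^ 2 by ring]
  nlinarith [hs]

lemma HH_le_one (ha : 0 < a) {y : ℝ} (hy : 0 ≤ y) : HH a y ≤ 1 := by
  unfold HH
  rw [div_le_one (by positivity)]
  have h1 : Real.sqrt (y ^ 2 + 4 * a ^ 2) ≤ 2 * a + y := by
    calc Real.sqrt (y ^ 2 + 4 * a ^ 2) ≤ Real.sqrt ((2 * a + y) ^ 2) :=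
          Real.sqrt_le_sqrt (by nlinarith)
      _ = 2 * a + y := by rw [Real.sqrt_sq (by positivity)]
  linarith

lemma HH_zero (ha : 0 < a) : HH a 0 = 1 := by
  unfold HH
  rw [show (0:ℝ) ^ 2 + 4 * a ^ 2 = (2 * a) ^ 2 by ring, Real.sqrt_sq (by positivity)]
  field_simp
  ring

lemma HH_inv (ha : 0 < a) (y : ℝ) : HH a y = 2 * a / (y + Real.sqrt (y ^ 2 + 4 * a ^ 2)) := by
  have hs := sq_sqrt' a y ha
  have hlt := lt_sqrt' a y ha
  have hpos : 0 < y + Real.sqrt (y ^ 2 + 4 * a ^ 2) := by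
    have h1 : -y ≤ |y| := neg_le_abs y
    have h2 : |y| < Real.sqrt (y ^ 2 + 4 * a ^ 2) := by
      rw [← Real.sqrt_sq_eq_abs]
      exact Real.sqrt_lt_sqrt (sq_nonneg y) (by nlinarith)
    linarith
  unfold HH
  rw [div_eq_div_iff (by positivity) (ne_of_gt hpos)]
  nlinarith [hs]

lemma HH_strictAnti (ha : 0 < a) : StrictAntiOn (HH a) (Ici 0) := by
  intro y1 _ y2 _ h12
  rw [HH_inv ha, HH_inv ha]
  have hs1 := lt_sqrt' a y1 ha
  have h2 : Real.sqrt (y1 ^ 2 + 4 * a ^ 2) ≤ Real.sqrt (y2 ^ 2 + 4 * a ^ 2) := by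
    apply Real.sqrt_le_sqrt
    have hy1 : (0:ℝ) ≤ y1 := by assumption
    nlinarith
  have hp1 : 0 < y1 + Real.sqrt (y1 ^ 2 + 4 * a ^ 2) := by
    have := lt_sqrt' a y1 ha; have hy1 : (0:ℝ) ≤ y1 := by assumption
    have := sqrt_pos' a y1 ha; linarith
  apply div_lt_div_of_pos_left (by positivity) hp1
  linarith

lemma HH_hasDerivAt (ha : 0 < a) (y : ℝ) :
    HasDerivAt (HH a) ((-1 + y / Real.sqrt (y ^ 2 + 4 * a ^ 2)) / (2 * a)) y := by
  have hg : HasDerivAt (fun y : ℝ => y ^ 2 + 4 * a ^ 2) (2 * y) y := by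
    simpa using (hasDerivAt_pow 2 y).add_const (4 * a ^ 2)
  have hs : HasDerivAt (fun y : ℝ => Real.sqrt (y ^ 2 + 4 * a ^ 2))
      (1 / (2 * Real.sqrt (y ^ 2 + 4 * a ^ 2)) * (2 * y)) y :=
    (Real.hasDerivAt_sqrt (by positivity)).comp y hg
  have h2 : HasDerivAt (fun y : ℝ => -y + Real.sqrt (y ^ 2 + 4 * a ^ 2))
      (-1 + 1 / (2 * Real.sqrt (y ^ 2 + 4 * a ^ 2)) * (2 * y)) y :=
    (hasDerivAt_id y).neg.add hs
  have := h2.div_const (2 * a)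
  refine this.congr_deriv ?_
  have hsp := sqrt_pos' a y ha
  ring

lemma HH_deriv_neg (ha : 0 < a) (y : ℝ) :
    (-1 + y / Real.sqrt (y ^ 2 + 4 * a ^ 2)) / (2 * a) < 0 := by
  have hlt := lt_sqrt' a y ha
  have hsp := sqrt_pos' a y ha
  apply div_neg_of_neg_of_pos _ (by positivity)
  have : y / Real.sqrt (y ^ 2 + 4 * a ^ 2) < 1 := (div_lt_one hsp).mpr hlt
  linarith


/-! ### Region lemmas -/

lemma NN_factor (ha : 0 < a) (x y : ℝ) :
    NN a x y = -((x - HH a y) * (a * (x + HH a y) + y)) := by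
  have h0 := NN_atH ha y
  unfold NN at *
  nlinarith [h0]

lemma NN_nonpos (ha : 0 < a) {x y : ℝ} (hy : 0 ≤ y) (hx : HH a y ≤ x) : NN a x y ≤ 0 := by
  rw [NN_factor ha]
  have hH := HH_pos ha y
  have : 0 ≤ (x - HH a y) * (a * (x + HH a y) + y) := by
    apply mul_nonneg (by linarith)
    nlinarith
  linarith

lemma NN_neg (ha : 0 < a) {x y : ℝ} (hy : 0 ≤ y) (hx : HH a y < x) : NN a x y < 0 := by
  rw [NN_factor ha]
  have hH := HH_pos ha y
  have : 0 < (x - HH a y) * (a * (x + HH a y) + y) := by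
    apply mul_pos (by linarith)
    nlinarith
  linarith

lemma DD_eq (a b c x y : ℝ) : DD b c x y = -(c * NN a x y) + (a * c - b) * (1 - x ^ 2) := by
  unfold DD NN; ring

lemma DD_nonneg (ha : 0 < a) (hb : 0 < b) (hc : 0 < c) (hq : b < a * c)
    {x y : ℝ} (hy : 0 ≤ y) (hx : HH a y ≤ x) : 0 ≤ DD b c x y := by
  have hH := HH_pos ha y
  have hN := NN_nonpos ha hy hx
  rcases le_or_gt x 1 with h1 | h1
  · rw [DD_eq a b c x y]
    have e1 : (0:ℝ) ≤ c * (-(NN a x y)) := mul_nonneg hc.le (by linarith)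
    have e2 : (0:ℝ) ≤ (a * c - b) * (1 - x ^ 2) :=
      mul_nonneg (by linarith) (by nlinarith)
    linarith
  · unfold DD
    have e1 : (0:ℝ) ≤ b * (x ^ 2 - 1) := mul_nonneg hb.le (by nlinarith)
    have e2 : (0:ℝ) ≤ c * x * y := mul_nonneg (mul_nonneg hc.le (by linarith)) hy
    nlinarith

lemma DD_pos (ha : 0 < a) (hb : 0 < b) (hc : 0 < c) (hq : b < a * c)
    {x y : ℝ} (hy : 0 ≤ y) (hx : HH a y ≤ x) (hne : x ≠ 1 ∨ 0 < y) : 0 < DD b c x y := by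
  have hH := HH_pos ha y
  have hN := NN_nonpos ha hy hx
  rcases lt_trichotomy x 1 with h1 | h1 | h1
  · rw [DD_eq a b c x y]
    have e1 : (0:ℝ) ≤ c * (-(NN a x y)) := mul_nonneg hc.le (by linarith)
    have e2 : (0:ℝ) < (a * c - b) * (1 - x ^ 2) :=
      mul_pos (by linarith) (by nlinarith)
    linarith
  · subst h1
    have hy' : 0 < y := by
      rcases hne with h | h
      · exact absurd rfl h
      · exact h
    unfold DD
    nlinarith
  · have e1 : (0:ℝ) < b * (x ^ 2 - 1) := mul_pos hb (by nlinarith)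
    have e2 : (0:ℝ) ≤ c * x * y := mul_nonneg (mul_nonneg hc.le (by linarith)) hy
    have e3 : DD b c x y = b * (x ^ 2 - 1) + c * x * y := by unfold DD; ring
    linarith

/-- global bound for `F` on the region -/
noncomputable def M0 (a b c : ℝ) : ℝ := max (a / b) (1 / c)

lemma M0_pos (ha : 0 < a) (hb : 0 < b) (hc : 0 < c) : 0 < M0 a b c :=
  lt_max_of_lt_left (div_pos ha hb)

lemma FF_nonpos (ha : 0 < a) (hb : 0 < b) (hc : 0 < c) (hq : b < a * c)
    {x y : ℝ} (hy : 0 ≤ y) (hx : HH a y ≤ x) : FF a b c x y ≤ 0 :=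
  div_nonpos_of_nonpos_of_nonneg (NN_nonpos ha hy hx) (DD_nonneg ha hb hc hq hy hx)

lemma FF_neg (ha : 0 < a) (hb : 0 < b) (hc : 0 < c) (hq : b < a * c)
    {x y : ℝ} (hy : 0 ≤ y) (hx : HH a y < x) (hne : x ≠ 1 ∨ 0 < y) : FF a b c x y < 0 :=
  div_neg_of_neg_of_pos (NN_neg ha hy hx) (DD_pos ha hb hc hq hy (le_of_lt hx) hne)

lemma FF_lower (ha : 0 < a) (hb : 0 < b) (hc : 0 < c) (hq : b < a * c)
    {x y : ℝ} (hy : 0 ≤ y) (hx : HH a y ≤ x) : -(M0 a b c) ≤ FF a b c x y := by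
  have hH := HH_pos ha y
  have hN := NN_nonpos ha hy hx
  have hM0 := M0_pos ha hb hc
  have hMb : a ≤ M0 a b c * b := by
    rw [← div_le_iff₀ hb]; exact le_max_left _ _
  have hMc : 1 ≤ M0 a b c * c := by
    rw [← div_le_iff₀ hc]; exact le_max_right _ _
  rcases eq_or_lt_of_le (DD_nonneg ha hb hc hq hy hx) with hD | hD
  · unfold FF
    rw [← hD, div_zero]
    linarith
  · rw [FF, le_div_iff₀ hD, neg_mul, neg_le]
    rcases le_or_gt x 1 with h1 | h1
    · have key : NN a x y + M0 a b c * DD b c x y =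
          (M0 a b c * c - 1) * (-(NN a x y)) + M0 a b c * ((a * c - b) * (1 - x ^ 2)) := by
        rw [DD_eq a b c x y]; ring
      have t1 : (0:ℝ) ≤ (M0 a b c * c - 1) * (-(NN a x y)) :=
        mul_nonneg (by linarith) (by linarith)
      have t2 : (0:ℝ) ≤ M0 a b c * ((a * c - b) * (1 - x ^ 2)) :=
        mul_nonneg hM0.le (mul_nonneg (by linarith) (by nlinarith))
      linarith
    · have key : NN a x y + M0 a b c * DD b c x y =
          (M0 a b c * b - a) * (x ^ 2 - 1) + (M0 a b c * c - 1) * (x * y) := by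
        unfold NN DD; ring
      have t1 : (0:ℝ) ≤ (M0 a b c * b - a) * (x ^ 2 - 1) :=
        mul_nonneg (by linarith) (by nlinarith)
      have t2 : (0:ℝ) ≤ (M0 a b c * c - 1) * (x * y) :=
        mul_nonneg (by linarith) (mul_nonneg (by linarith) hy)
      linarith

lemma FF_atH (ha : 0 < a) (y : ℝ) : FF a b c (HH a y) y = 0 := by
  rw [FF, NN_atH ha, zero_div]


/-! ### The clamped field -/

/-- lower boundary of the invariant region -/
noncomputable def lb (a ε K t : ℝ) : ℝ := max (HH a t) (1 + ε - K * t)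

/-- clamping onto the region -/
noncomputable def cl (a ε K t x : ℝ) : ℝ := max (lb a ε K t) (min x (1 + ε))

/-- the clamped field -/
noncomputable def Vf (a b c ε K t x : ℝ) : ℝ := FF a b c (cl a ε K t x) t

variable {ε K Y t x z : ℝ}

lemma HH_le_lb : HH a t ≤ lb a ε K t := le_max_left _ _

lemma lb_le (ha : 0 < a) (hε0 : 0 < ε) (hK : 0 < K) (ht : 0 ≤ t) : lb a ε K t ≤ 1 + ε := by
  apply max_le (by linarith [HH_le_one ha ht]) (by nlinarith)

lemma cl_ge : lb a ε K t ≤ cl a ε K t x := le_max_left _ _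

lemma cl_le (ha : 0 < a) (hε0 : 0 < ε) (hK : 0 < K) (ht : 0 ≤ t) : cl a ε K t x ≤ 1 + ε :=
  max_le (lb_le ha hε0 hK ht) (min_le_right _ _)

lemma HH_le_cl : HH a t ≤ cl a ε K t x := le_trans HH_le_lb cl_ge

lemma cl_eq_self (hx1 : lb a ε K t ≤ x) (hx2 : x ≤ 1 + ε) : cl a ε K t x = x := by
  unfold cl
  rw [min_eq_left hx2, max_eq_right hx1]

lemma cl_lipschitz : LipschitzWith 1 (fun x => cl a ε K t x) := by
  apply LipschitzWith.of_dist_le_mul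
  intro x y
  rw [NNReal.coe_one, one_mul, Real.dist_eq, Real.dist_eq]
  unfold cl
  calc |max (lb a ε K t) (min x (1 + ε)) - max (lb a ε K t) (min y (1 + ε))|
      = |max (min x (1 + ε)) (lb a ε K t) - max (min y (1 + ε)) (lb a ε K t)| := by
        rw [max_comm (lb a ε K t), max_comm (lb a ε K t)]
    _ ≤ |min x (1 + ε) - min y (1 + ε)| := abs_max_sub_max_le_abs _ _ _
    _ ≤ max |x - y| |(1 + ε) - (1 + ε)| := abs_min_sub_min_le_max _ _ _ _
    _ = |x - y| := by rw [sub_self, abs_zero, max_eq_left (abs_nonneg _)]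

lemma HH_anti_le (ha : 0 < a) (ht : 0 ≤ t) (htY : t ≤ Y) : HH a Y ≤ HH a t := by
  rcases eq_or_lt_of_le htY with h | h
  · rw [h]
  · exact (HH_strictAnti ha ht (le_trans ht htY : (0:ℝ) ≤ Y) h).le

/-- uniform positive lower bound on the denominator over the truncated region -/
noncomputable def dmin (a b c ε K Y : ℝ) : ℝ :=
  min (b * ε) (min (c * (ε / (2 * K))) ((a * c - b) / a * (HH a Y * (ε / (2 * K)))))

lemma dmin_pos (ha : 0 < a) (hb : 0 < b) (hc : 0 < c) (hq : b < a * c)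
    (hε0 : 0 < ε) (hK : 0 < K) : 0 < dmin a b c ε K Y := by
  have h1 := HH_pos ha Y
  have h2 : 0 < ε / (2 * K) := by positivity
  apply lt_min (by positivity) (lt_min (by positivity) _)
  exact mul_pos (div_pos (by linarith) ha) (by positivity)

lemma DD_ge_dmin (ha : 0 < a) (hb : 0 < b) (hc : 0 < c) (hq : b < a * c)
    (hε0 : 0 < ε) (hε1 : ε < 1) (hK : 0 < K) (ht : 0 ≤ t) (htY : t ≤ Y)
    (hz1 : lb a ε K t ≤ z) (hz2 : z ≤ 1 + ε) : dmin a b c ε K Y ≤ DD b c z t := by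
  have hHz : HH a t ≤ z := le_trans HH_le_lb hz1
  have hHpos := HH_pos ha t
  have hDD : DD b c z t = b * (z ^ 2 - 1) + c * z * t := by unfold DD; ring
  rcases le_or_gt t (ε / (2 * K)) with hcase | hcase
  · -- early times : z is above 1 + ε/2
    have hzl : 1 + ε / 2 ≤ z := by
      have h1 : 1 + ε - K * t ≤ z := le_trans (le_max_right _ _) hz1
      have : K * t ≤ ε / 2 := by
        calc K * t ≤ K * (ε / (2 * K)) := by nlinarith
          _ = ε / 2 := by field_simp
      linarith
    have e1 : b * ε ≤ b * (z ^ 2 - 1) := by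
      have h' : ε ≤ z ^ 2 - 1 := by nlinarith
      exact mul_le_mul_of_nonneg_left h' hb.le
    have e2 : 0 ≤ c * z * t := mul_nonneg (mul_nonneg hc.le (by linarith)) ht
    calc dmin a b c ε K Y ≤ b * ε := min_le_left _ _
      _ ≤ DD b c z t := by rw [hDD]; linarith
  · rcases le_or_gt 1 z with hz | hz
    · -- z at least 1 : use the c z t term
      have e1 : 0 ≤ b * (z ^ 2 - 1) := mul_nonneg hb.le (by nlinarith)
      have e2 : c * (ε / (2 * K)) ≤ c * z * t := by
        have h2 : 0 < ε / (2 * K) := by positivity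
        have hzt : ε / (2 * K) ≤ z * t := by
          nlinarith [mul_nonneg (by linarith : (0:ℝ) ≤ z - 1) ht]
        rw [mul_assoc]
        exact mul_le_mul_of_nonneg_left hzt hc.le
      calc dmin a b c ε K Y ≤ c * (ε / (2 * K)) :=
            le_trans (min_le_right _ _) (min_le_left _ _)
        _ ≤ DD b c z t := by rw [hDD]; linarith
    · -- z below 1 : use closeness to the barrier
      have hNh : NN a (HH a t) t = 0 := NN_atH ha t
      have hNh' : a * (1 - HH a t ^ 2) = HH a t * t := by unfold NN at hNh; linarith
      have key : (a * c - b) * (HH a t * t) ≤ a * DD b c z t := by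
        have s1 : a * b * (1 - z ^ 2) ≤ a * b * (1 - HH a t ^ 2) := by
          nlinarith [mul_nonneg (mul_nonneg ha.le hb.le)
            (mul_nonneg (sub_nonneg.2 hHz) (by linarith : (0:ℝ) ≤ z + HH a t))]
        have s2 : a * c * (HH a t * t) ≤ a * c * (z * t) := by
          nlinarith [mul_nonneg (mul_nonneg (mul_nonneg ha.le hc.le) (sub_nonneg.2 hHz)) ht]
        have s3 : a * b * (1 - HH a t ^ 2) = b * (HH a t * t) := by
          linear_combination b * hNh'
        have s4 : a * DD b c z t = -(a * b * (1 - z ^ 2)) + a * c * (z * t) := by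
          unfold DD; ring
        linarith
      have hHY : HH a Y ≤ HH a t := HH_anti_le ha ht htY
      have hHYpos := HH_pos ha Y
      have step : (a * c - b) / a * (HH a Y * (ε / (2 * K))) ≤ DD b c z t := by
        have hmono : HH a Y * (ε / (2 * K)) ≤ HH a t * t :=
          mul_le_mul hHY hcase.le (by positivity) hHpos.le
        have h3 : (a * c - b) * (HH a Y * (ε / (2 * K))) ≤ (a * c - b) * (HH a t * t) :=
          mul_le_mul_of_nonneg_left hmono (by linarith)
        rw [div_mul_eq_mul_div, div_le_iff₀ ha]
        calc (a * c - b) * (HH a Y * (ε / (2 * K))) ≤ (a * c - b) * (HH a t * t) := h3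
          _ ≤ a * DD b c z t := key
          _ = DD b c z t * a := by ring
      exact le_trans (le_trans (min_le_right _ _) (min_le_right _ _)) step


/-! ### Derivative and Lipschitz bounds for the field -/

lemma NN_hasDerivAt (a t z : ℝ) :
    HasDerivAt (fun z : ℝ => NN a z t) (-(2 * a * z) - t) z := by
  unfold NN
  have h1 : HasDerivAt (fun z : ℝ => a * (1 - z ^ 2) - z * t)
      (a * (-(2 * z ^ 1)) - 1 * t) z := by
    exact (((hasDerivAt_pow 2 z).const_sub 1).const_mul a).sub ((hasDerivAt_id z).mul_const t)
  convert h1 using 1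
  push_cast
  ring

lemma DD_hasDerivAt (b c t z : ℝ) :
    HasDerivAt (fun z : ℝ => DD b c z t) (2 * b * z + c * t) z := by
  unfold DD
  have h1 : HasDerivAt (fun z : ℝ => -(b * (1 - z ^ 2)) + c * z * t)
      (-(b * (-(2 * z ^ 1))) + c * 1 * t) z := by
    exact ((((hasDerivAt_pow 2 z).const_sub 1).const_mul b).neg).add
      (((hasDerivAt_id z).const_mul c).mul_const t)
  convert h1 using 1
  push_cast
  ring

lemma FF_hasDerivAt {t z : ℝ} (hD : DD b c z t ≠ 0) :
    HasDerivAt (fun z => FF a b c z t)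
      (((-(2 * a * z) - t) * DD b c z t - NN a z t * (2 * b * z + c * t)) / DD b c z t ^ 2) z :=
  (NN_hasDerivAt a t z).div (DD_hasDerivAt b c t z) hD

/-- numerator of the Lipschitz bound -/
noncomputable def BL (a b c ε K Y : ℝ) : ℝ :=
  ((4 * a + Y) * (5 * b + 2 * c * Y) + (5 * a + 2 * Y) * (4 * b + c * Y)) /
    dmin a b c ε K Y ^ 2

lemma abs_bounds (ha : 0 < a) (hb : 0 < b) (hc : 0 < c)
    (hz0 : 0 ≤ z) (hz2 : z ≤ 2) (ht : 0 ≤ t) (htY : t ≤ Y) :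
    |(-(2 * a * z) - t)| ≤ 4 * a + Y ∧ |NN a z t| ≤ 5 * a + 2 * Y ∧
    |DD b c z t| ≤ 5 * b + 2 * c * Y ∧ |2 * b * z + c * t| ≤ 4 * b + c * Y := by
  have hz4 : z ^ 2 ≤ 4 := by nlinarith
  have hzt : 0 ≤ z * t := mul_nonneg hz0 ht
  have hzt2 : z * t ≤ 2 * Y := mul_le_mul hz2 htY ht (by norm_num)
  have hY0 : 0 ≤ Y := le_trans ht htY
  refine ⟨?_, ?_, ?_, ?_⟩
  · rw [abs_le]; constructor <;> nlinarith [mul_le_mul_of_nonneg_left hz2 ha.le]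
  · unfold NN
    rw [abs_le]; constructor <;>
      nlinarith [mul_le_mul_of_nonneg_left hz4 ha.le, mul_nonneg ha.le (sq_nonneg z)]
  · unfold DD
    rw [abs_le]; constructor <;>
      nlinarith [mul_le_mul_of_nonneg_left hz4 hb.le, mul_nonneg hb.le (sq_nonneg z),
        mul_le_mul_of_nonneg_left hzt2 hc.le, mul_nonneg hc.le hzt]
  · rw [abs_le]; constructor <;>
      nlinarith [mul_le_mul_of_nonneg_left hz2 hb.le, mul_le_mul_of_nonneg_left htY hc.le]

lemma lipFF_on (ha : 0 < a) (hb : 0 < b) (hc : 0 < c) (hq : b < a * c)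
    (hε0 : 0 < ε) (hε1 : ε < 1) (hK : 0 < K) (ht : 0 ≤ t) (htY : t ≤ Y) :
    LipschitzOnWith (Real.toNNReal (BL a b c ε K Y)) (fun z => FF a b c z t)
      (Icc (lb a ε K t) (1 + ε)) := by
  have hd := dmin_pos (Y := Y) ha hb hc hq hε0 hK
  apply (convex_Icc _ _).lipschitzOnWith_of_nnnorm_hasDerivWithin_le
    (f' := fun z => ((-(2 * a * z) - t) * DD b c z t - NN a z t * (2 * b * z + c * t)) /
      DD b c z t ^ 2)
  · intro z hz
    have hDz : dmin a b c ε K Y ≤ DD b c z t :=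
      DD_ge_dmin ha hb hc hq hε0 hε1 hK ht htY hz.1 hz.2
    exact (FF_hasDerivAt (by linarith)).hasDerivWithinAt
  · intro z hz
    have hDz : dmin a b c ε K Y ≤ DD b c z t :=
      DD_ge_dmin ha hb hc hq hε0 hε1 hK ht htY hz.1 hz.2
    have hz0 : 0 ≤ z := le_trans (le_trans (HH_pos ha t).le (le_trans HH_le_lb hz.1)) le_rfl
    have hz2 : z ≤ 2 := by linarith [hz.2]
    obtain ⟨e1, e2, e3, e4⟩ := abs_bounds ha hb hc hz0 hz2 ht htY
    have hnum : |(-(2 * a * z) - t) * DD b c z t - NN a z t * (2 * b * z + c * t)| ≤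
        (4 * a + Y) * (5 * b + 2 * c * Y) + (5 * a + 2 * Y) * (4 * b + c * Y) := by
      calc |(-(2 * a * z) - t) * DD b c z t - NN a z t * (2 * b * z + c * t)|
          ≤ |(-(2 * a * z) - t) * DD b c z t| + |NN a z t * (2 * b * z + c * t)| :=
            abs_sub _ _
        _ = |(-(2 * a * z) - t)| * |DD b c z t| + |NN a z t| * |2 * b * z + c * t| := by
            rw [abs_mul, abs_mul]
        _ ≤ (4 * a + Y) * (5 * b + 2 * c * Y) + (5 * a + 2 * Y) * (4 * b + c * Y) := by
            have := abs_nonneg ((-(2 * a * z) - t))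
            have := abs_nonneg (NN a z t)
            have := abs_nonneg (DD b c z t)
            have := abs_nonneg (2 * b * z + c * t)
            have hY0 : (0:ℝ) ≤ Y := le_trans ht htY
            have q1 : (0:ℝ) ≤ 4 * a + Y := by linarith
            have q2 : (0:ℝ) ≤ 5 * a + 2 * Y := by linarith
            gcongr
    have hD2 : dmin a b c ε K Y ^ 2 ≤ DD b c z t ^ 2 := by nlinarith
    have habs : |((-(2 * a * z) - t) * DD b c z t - NN a z t * (2 * b * z + c * t)) /
        DD b c z t ^ 2| ≤ BL a b c ε K Y := by
      rw [abs_div, abs_of_nonneg (sq_nonneg (DD b c z t))]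
      unfold BL
      have hNUM0 : (0:ℝ) ≤ (4 * a + Y) * (5 * b + 2 * c * Y) + (5 * a + 2 * Y) * (4 * b + c * Y) :=
        le_trans (abs_nonneg _) hnum
      apply div_le_div₀ hNUM0 hnum (by positivity) hD2
    have hBL0 : 0 ≤ BL a b c ε K Y := le_trans (abs_nonneg _) habs
    rw [← NNReal.coe_le_coe, coe_nnnorm, Real.norm_eq_abs, Real.coe_toNNReal _ hBL0]
    exact habs

lemma Vf_lip (ha : 0 < a) (hb : 0 < b) (hc : 0 < c) (hq : b < a * c)
    (hε0 : 0 < ε) (hε1 : ε < 1) (hK : 0 < K) (ht : 0 ≤ t) (htY : t ≤ Y) :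
    LipschitzWith (Real.toNNReal (BL a b c ε K Y)) (fun x => Vf a b c ε K t x) := by
  have h1 := lipFF_on (Y := Y) ha hb hc hq hε0 hε1 hK ht htY
  have h2 : LipschitzOnWith 1 (fun x => cl a ε K t x) univ := cl_lipschitz.lipschitzOnWith
  have h3 := h1.comp h2 (fun x _ => ⟨cl_ge, cl_le ha hε0 hK ht⟩)
  rw [mul_one, lipschitzOnWith_univ] at h3
  exact h3

lemma Vf_nonpos (ha : 0 < a) (hb : 0 < b) (hc : 0 < c) (hq : b < a * c)
    (ht : 0 ≤ t) : Vf a b c ε K t x ≤ 0 :=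
  FF_nonpos ha hb hc hq ht HH_le_cl

lemma Vf_lower (ha : 0 < a) (hb : 0 < b) (hc : 0 < c) (hq : b < a * c)
    (ht : 0 ≤ t) : -(M0 a b c) ≤ Vf a b c ε K t x :=
  FF_lower ha hb hc hq ht HH_le_cl

lemma Vf_abs_le (ha : 0 < a) (hb : 0 < b) (hc : 0 < c) (hq : b < a * c)
    (ht : 0 ≤ t) : ‖Vf a b c ε K t x‖ ≤ M0 a b c := by
  rw [Real.norm_eq_abs, abs_le]
  exact ⟨Vf_lower ha hb hc hq ht,
    le_trans (Vf_nonpos ha hb hc hq ht) (M0_pos ha hb hc).le⟩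

lemma HH_continuous (ha : 0 < a) : Continuous (HH a) := by
  unfold HH
  have h1 : Continuous fun y : ℝ => y ^ 2 + 4 * a ^ 2 := by continuity
  exact ((continuous_id.neg).add (Real.continuous_sqrt.comp h1)).div_const _

lemma cl_continuous_t (ha : 0 < a) (x : ℝ) : Continuous (fun t => cl a ε K t x) := by
  unfold cl lb
  exact ((HH_continuous ha).max (by continuity)).max continuous_const

lemma Vf_contOn (ha : 0 < a) (hb : 0 < b) (hc : 0 < c) (hq : b < a * c)
    (hε0 : 0 < ε) (hε1 : ε < 1) (hK : 0 < K) (x : ℝ) :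
    ContinuousOn (fun t => Vf a b c ε K t x) (Icc 0 Y) := by
  have hcl := cl_continuous_t (ε := ε) (K := K) ha x
  have hnum : Continuous fun t => NN a (cl a ε K t x) t := by
    unfold NN
    exact (continuous_const.mul (continuous_const.sub (hcl.pow 2))).sub
      (hcl.mul continuous_id)
  have hden : Continuous fun t => DD b c (cl a ε K t x) t := by
    unfold DD
    exact ((continuous_const.mul (continuous_const.sub (hcl.pow 2))).neg).add
      ((continuous_const.mul hcl).mul continuous_id)
  apply ContinuousOn.div hnum.continuousOn hden.continuousOn
  intro t htm
  have := DD_ge_dmin (z := cl a ε K t x) ha hb hc hq hε0 hε1 hK htm.1 htm.2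
    cl_ge (cl_le ha hε0 hK htm.1)
  have hd := dmin_pos (Y := Y) ha hb hc hq hε0 hK
  exact ne_of_gt (by linarith)

lemma exists_sol (ha : 0 < a) (hb : 0 < b) (hc : 0 < c) (hq : b < a * c)
    (hε0 : 0 < ε) (hε1 : ε < 1) (hK : 0 < K) {Y : ℝ} (hY : 0 < Y) :
    ∃ f : ℝ → ℝ, f 0 = 1 + ε ∧
      ∀ t ∈ Icc 0 Y, HasDerivWithinAt f (Vf a b c ε K t (f t)) (Icc 0 Y) t := by
  have hM0 := M0_pos ha hb hc
  have hpl : IsPicardLindelof (fun t x => Vf a b c ε K t x) (tmin := 0) (tmax := Y)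
      ⟨0, le_refl 0, hY.le⟩ (1 + ε) (Real.toNNReal (M0 a b c * Y + 1)) 0
      (Real.toNNReal (M0 a b c)) (Real.toNNReal (BL a b c ε K Y)) := by
    constructor
    · intro t htm
      exact (Vf_lip ha hb hc hq hε0 hε1 hK htm.1 htm.2).lipschitzOnWith
    · intro x _
      exact Vf_contOn ha hb hc hq hε0 hε1 hK x
    · intro t htm x _
      rw [Real.coe_toNNReal _ hM0.le]
      exact Vf_abs_le ha hb hc hq htm.1
    · simp only [Real.coe_toNNReal _ hM0.le, NNReal.coe_zero, sub_zero, sub_self,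
        Real.coe_toNNReal _ (by positivity : (0:ℝ) ≤ M0 a b c * Y + 1)]
      rw [max_eq_left hY.le]
      linarith
  exact hpl.exists_eq_forall_mem_Icc_hasDerivWithinAt₀


/-! ### Invariance of the region -/

lemma hder_Ici {f : ℝ → ℝ} {Y : ℝ}
    (hder : ∀ t ∈ Icc 0 Y, HasDerivWithinAt f (Vf a b c ε K t (f t)) (Icc 0 Y) t)
    {t : ℝ} (ht : t ∈ Ico 0 Y) :
    HasDerivWithinAt f (Vf a b c ε K t (f t)) (Ici t) t := by
  apply (hder t (Ico_subset_Icc_self ht)).mono_of_mem_nhdsWithin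
  apply mem_nhdsWithin.mpr
  exact ⟨Iio Y, isOpen_Iio, ht.2, fun z hz => ⟨le_trans ht.1 hz.2, hz.1.le⟩⟩

lemma sol_upper (ha : 0 < a) (hb : 0 < b) (hc : 0 < c) (hq : b < a * c)
    (hε0 : 0 < ε) (hε1 : ε < 1) (hK : 0 < K) {Y : ℝ} {f : ℝ → ℝ} (hY : 0 < Y)
    (hf0 : f 0 = 1 + ε)
    (hder : ∀ t ∈ Icc 0 Y, HasDerivWithinAt f (Vf a b c ε K t (f t)) (Icc 0 Y) t) :
    ∀ t ∈ Icc 0 Y, f t ≤ 1 + ε := by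
  have hcont : ContinuousOn f (Icc 0 Y) := fun t ht => (hder t ht).continuousWithinAt
  intro t ht
  apply image_le_of_deriv_right_lt_deriv_boundary' (B := fun _ => 1 + ε) (B' := fun _ => 0)
    hcont (fun s hs => hder_Ici hder hs) (le_of_eq hf0) continuousOn_const
    (fun s _ => (hasDerivWithinAt_const s _ _)) _ ht
  intro s hs hfs
  have hcl : cl a ε K s (f s) = 1 + ε := by
    rw [hfs]
    unfold cl
    rw [min_self, max_eq_right (lb_le ha hε0 hK hs.1)]
  show Vf a b c ε K s (f s) < 0
  unfold Vf
  rw [hcl]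
  exact FF_neg ha hb hc hq hs.1 (by linarith [HH_le_one ha hs.1]) (Or.inl (by linarith))

/-- slope function used as upper derivative estimate for the boundary `lb` -/
noncomputable def lbD (a ε K t : ℝ) : ℝ :=
  if HH a t < 1 + ε - K * t then -K
  else max ((-1 + t / Real.sqrt (t ^ 2 + 4 * a ^ 2)) / (2 * a)) (-K)

lemma lb_slope_est (ha : 0 < a) (hK : 0 < K) (t : ℝ) (r : ℝ) (hr : lbD a ε K t < r) :
    ∀ᶠ z in 𝓝[>] t, slope (lb a ε K) t z < r := by
  unfold lbD at hr
  split_ifs at hr with hcase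
  · -- locally lb = the line
    have hopen : {z : ℝ | HH a z < 1 + ε - K * z} ∈ 𝓝 t :=
      (isOpen_lt (HH_continuous ha) (by continuity)).mem_nhds hcase
    filter_upwards [self_mem_nhdsWithin, nhdsWithin_le_nhds hopen] with z hz1 hz2
    have hzt : t < z := hz1
    have hlbz : lb a ε K z = 1 + ε - K * z := max_eq_right (le_of_lt hz2)
    have hlbt : lb a ε K t = 1 + ε - K * t := max_eq_right (le_of_lt hcase)
    rw [slope_def_field, hlbz, hlbt]
    have hne : z - t ≠ 0 := sub_ne_zero.mpr (ne_of_gt hzt)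
    have : (1 + ε - K * z - (1 + ε - K * t)) = -K * (z - t) := by ring
    rw [this, mul_div_assoc, div_self hne, mul_one]
    linarith
  · -- lb t = HH a t
    push_neg at hcase
    have hlbt : lb a ε K t = HH a t := max_eq_left hcase
    have hrK : -K < r := lt_of_le_of_lt (le_max_right _ _) hr
    have hrH : (-1 + t / Real.sqrt (t ^ 2 + 4 * a ^ 2)) / (2 * a) < r :=
      lt_of_le_of_lt (le_max_left _ _) hr
    have htend := hasDerivAt_iff_tendsto_slope.mp (HH_hasDerivAt ha t)
    have hev : ∀ᶠ z in 𝓝[≠] t, slope (HH a) t z < r :=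
      htend (Iio_mem_nhds hrH)
    have hev' : ∀ᶠ z in 𝓝[>] t, slope (HH a) t z < r :=
      hev.filter_mono (nhdsWithin_mono t (fun z hz => ne_of_gt hz))
    filter_upwards [self_mem_nhdsWithin, hev'] with z hz1 hz2
    have hzt : t < z := hz1
    have hzt' : 0 < z - t := by linarith
    have h1 : lb a ε K z - lb a ε K t ≤ max (HH a z - HH a t) (-K * (z - t)) := by
      rw [sub_le_iff_le_add]
      apply max_le
      · calc HH a z = (HH a z - HH a t) + HH a t := by ring
          _ ≤ max (HH a z - HH a t) (-K * (z - t)) + lb a ε K t := by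
              rw [hlbt]; gcongr; exact le_max_left _ _
      · calc 1 + ε - K * z = (-K * (z - t)) + (1 + ε - K * t) := by ring
          _ ≤ max (HH a z - HH a t) (-K * (z - t)) + lb a ε K t := by
              rw [hlbt]; exact add_le_add (le_max_right _ _) hcase
    have h2 : slope (lb a ε K) t z ≤ max (slope (HH a) t z) (-K) := by
      rw [slope_def_field, slope_def_field]
      calc (lb a ε K z - lb a ε K t) / (z - t)
          ≤ max (HH a z - HH a t) (-K * (z - t)) / (z - t) :=
            (div_le_div_iff_of_pos_right hzt').mpr h1
        _ = max ((HH a z - HH a t) / (z - t)) (-K * (z - t) / (z - t)) := by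
            rw [max_div_div_right hzt'.le]
        _ = max ((HH a z - HH a t) / (z - t)) (-K) := by
            rw [mul_div_assoc, div_self (ne_of_gt hzt'), mul_one]
    exact lt_of_le_of_lt h2 (max_lt hz2 hrK)

lemma sol_lower (ha : 0 < a) (hb : 0 < b) (hc : 0 < c) (hq : b < a * c)
    (hε0 : 0 < ε) (hε1 : ε < 1) (hK : 0 < K) (hKM : M0 a b c < K)
    {Y : ℝ} {f : ℝ → ℝ} (hY : 0 < Y) (hf0 : f 0 = 1 + ε)
    (hder : ∀ t ∈ Icc 0 Y, HasDerivWithinAt f (Vf a b c ε K t (f t)) (Icc 0 Y) t) :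
    ∀ t ∈ Icc 0 Y, lb a ε K t ≤ f t := by
  have hcont : ContinuousOn f (Icc 0 Y) := fun t ht => (hder t ht).continuousWithinAt
  have hup := sol_upper ha hb hc hq hε0 hε1 hK hY hf0 hder
  have hlbcont : Continuous (lb a ε K) := (HH_continuous ha).max (by continuity)
  intro t ht
  apply image_le_of_liminf_slope_right_lt_deriv_boundary' (f := lb a ε K)
    (f' := lbD a ε K) (B := f) (B' := fun t => Vf a b c ε K t (f t))
    hlbcont.continuousOn (fun s _ r hr => (lb_slope_est ha hK s r hr).frequently)
    _ hcont (fun s hs => hder_Ici hder hs) _ ht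
  · -- initial point
    rw [hf0]
    unfold lb
    apply max_le (by linarith [HH_zero ha]) (by norm_num)
  · -- at touching points the field beats the boundary slope
    intro s hs heq
    have hfs : f s ≤ 1 + ε := hup s (Ico_subset_Icc_self hs)
    show lbD a ε K s < Vf a b c ε K s (f s)
    unfold Vf
    rw [cl_eq_self (le_of_eq heq) hfs, ← heq]
    unfold lbD
    split_ifs with hcase
    · -- boundary is the line, field is at least -M0 > -K
      have hlb := FF_lower ha hb hc hq hs.1 (HH_le_lb (ε := ε) (K := K))
      linarith
    · -- boundary is the barrier HH, where the field vanishes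
      push_neg at hcase
      have hlbs : lb a ε K s = HH a s := max_eq_left hcase
      rw [hlbs, FF_atH ha]
      apply max_lt (HH_deriv_neg ha s) (by linarith)


/-! ### Uniqueness and gluing -/

lemma sol_unique (ha : 0 < a) (hb : 0 < b) (hc : 0 < c) (hq : b < a * c)
    (hε0 : 0 < ε) (hε1 : ε < 1) (hK : 0 < K) {Y1 Y2 B : ℝ} (hB : 0 < B)
    (hBY1 : B ≤ Y1) (hBY2 : B ≤ Y2) {f g : ℝ → ℝ} (h0 : f 0 = g 0)
    (hfd : ∀ t ∈ Icc 0 Y1, HasDerivWithinAt f (Vf a b c ε K t (f t)) (Icc 0 Y1) t)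
    (hgd : ∀ t ∈ Icc 0 Y2, HasDerivWithinAt g (Vf a b c ε K t (g t)) (Icc 0 Y2) t) :
    EqOn f g (Icc 0 B) := by
  have hlip : ∀ t, LipschitzOnWith (Real.toNNReal (BL a b c ε K B))
      (fun x => Vf a b c ε K (min t B) x) (univ : Set ℝ) := by
    intro t
    apply LipschitzWith.lipschitzOnWith
    rcases le_or_gt 0 t with h | h
    · exact Vf_lip ha hb hc hq hε0 hε1 hK (le_min h hB.le) (min_le_right _ _)
    · have hmin : min t B = t := min_eq_left (by linarith)
      rw [hmin]
      have hconst : ∀ x, cl a ε K t x = lb a ε K t := by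
        intro x
        apply max_eq_left
        calc min x (1 + ε) ≤ 1 + ε := min_le_right _ _
          _ ≤ 1 + ε - K * t := by nlinarith
          _ ≤ lb a ε K t := le_max_right _ _
      have hcf : (fun x => Vf a b c ε K t x) = fun _ => FF a b c (lb a ε K t) t := by
        funext x; unfold Vf; rw [hconst]
      rw [hcf]
      exact (LipschitzWith.const _).weaken (by positivity)
  apply ODE_solution_unique_of_mem_Icc_right (fun t _ => hlip t)
  · exact fun t ht => ((hfd t ⟨ht.1, le_trans ht.2 hBY1⟩).continuousWithinAt).mono
      (Icc_subset_Icc_right hBY1)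
  · intro t ht
    have h1 := hder_Ici (Y := Y1) hfd ⟨ht.1, lt_of_lt_of_le ht.2 hBY1⟩
    rw [min_eq_left ht.2.le]
    exact h1
  · exact fun t _ => mem_univ _
  · exact fun t ht => ((hgd t ⟨ht.1, le_trans ht.2 hBY2⟩).continuousWithinAt).mono
      (Icc_subset_Icc_right hBY2)
  · intro t ht
    have h1 := hder_Ici (Y := Y2) hgd ⟨ht.1, lt_of_lt_of_le ht.2 hBY2⟩
    rw [min_eq_left ht.2.le]
    exact h1
  · exact fun t _ => mem_univ _
  · exact h0

theorem main_aux (a b c ε : ℝ) (ha : 0 < a) (hb : 0 < b) (hc : 0 < c) (hq : b < a * c)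
    (hε0 : 0 < ε) (hε1 : ε < 1) :
    ∃ x : ℝ → ℝ, DifferentiableOn ℝ x (Ici 0) ∧ x 0 = 1 + ε ∧
      (∀ y > (0 : ℝ), HasDerivAt x (FF a b c (x y) y) y) ∧
      StrictAntiOn x (Ici 0) ∧
      (∀ y ≥ (0 : ℝ), HH a y ≤ x y ∧ x y ≤ 1 + ε) := by
  set K : ℝ := M0 a b c + 1 with hKdef
  have hM0 := M0_pos ha hb hc
  have hK : 0 < K := by rw [hKdef]; linarith
  have hKM : M0 a b c < K := by rw [hKdef]; linarith
  have hex : ∀ k : ℕ, ∃ f : ℝ → ℝ, f 0 = 1 + ε ∧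
      ∀ t ∈ Icc 0 ((k : ℝ) + 1),
        HasDerivWithinAt f (Vf a b c ε K t (f t)) (Icc 0 ((k : ℝ) + 1)) t :=
    fun k => exists_sol ha hb hc hq hε0 hε1 hK (by positivity)
  choose F hF0 hFd using hex
  have hagree : ∀ (j k : ℕ) (t : ℝ), 0 ≤ t → t ≤ (j : ℝ) + 1 → t ≤ (k : ℝ) + 1 →
      F j t = F k t := by
    intro j k t h0 h1 h2
    rcases eq_or_lt_of_le h0 with h0' | h0'
    · rw [← h0', hF0, hF0]
    · exact sol_unique ha hb hc hq hε0 hε1 hK h0'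
        (le_refl t |>.trans h1) (le_refl t |>.trans h2)
        (by rw [hF0, hF0]) (hFd j) (hFd k) ⟨h0, le_refl t⟩
  set sol : ℝ → ℝ := fun t => F ⌊t⌋₊ t with hsoldef
  have hsolk : ∀ (k : ℕ) (t : ℝ), 0 ≤ t → t ≤ (k : ℝ) + 1 → sol t = F k t := by
    intro k t h0 h1
    exact hagree ⌊t⌋₊ k t h0 (Nat.lt_floor_add_one t).le h1
  have hsol0 : sol 0 = 1 + ε := by
    show F ⌊(0:ℝ)⌋₊ 0 = 1 + ε
    rw [Nat.floor_zero]
    exact hF0 0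
  have hsolDeriv : ∀ y > (0:ℝ), HasDerivAt sol (Vf a b c ε K y (sol y)) y := by
    intro y hy
    set k := ⌊y⌋₊ with hk
    have hyk : y < (k : ℝ) + 1 := Nat.lt_floor_add_one y
    have hev : sol =ᶠ[𝓝 y] F k := by
      filter_upwards [isOpen_Ioo.mem_nhds (⟨hy, hyk⟩ : y ∈ Ioo 0 ((k:ℝ)+1))] with z hz
      exact hsolk k z hz.1.le hz.2.le
    have hdF : HasDerivAt (F k) (Vf a b c ε K y (F k y)) y :=
      (hFd k y ⟨hy.le, hyk.le⟩).hasDerivAt (Icc_mem_nhds hy hyk)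
    have h2 : HasDerivAt sol (Vf a b c ε K y (F k y)) y := hdF.congr_of_eventuallyEq hev
    rwa [← hsolk k y hy.le hyk.le] at h2
  have hsolmem : ∀ y ≥ (0:ℝ), lb a ε K y ≤ sol y ∧ sol y ≤ 1 + ε := by
    intro y hy
    set k := ⌊y⌋₊ with hk
    have hyk : y ≤ (k : ℝ) + 1 := (Nat.lt_floor_add_one y).le
    have hmem : y ∈ Icc (0:ℝ) ((k:ℝ)+1) := ⟨hy, hyk⟩
    rw [hsolk k y hy hyk]
    exact ⟨sol_lower ha hb hc hq hε0 hε1 hK hKM (by positivity) (hF0 k) (hFd k) y hmem,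
      sol_upper ha hb hc hq hε0 hε1 hK (by positivity) (hF0 k) (hFd k) y hmem⟩
  have hclsol : ∀ y ≥ (0:ℝ), Vf a b c ε K y (sol y) = FF a b c (sol y) y := by
    intro y hy
    unfold Vf
    rw [cl_eq_self (hsolmem y hy).1 (hsolmem y hy).2]
  have hdiff : DifferentiableOn ℝ sol (Ici 0) := by
    intro y hy
    rcases eq_or_lt_of_le (mem_Ici.mp hy) with h0 | h0
    · -- at the left endpoint
      rw [← h0]
      have hIcc1 : Icc (0:ℝ) 1 ∈ 𝓝[Ici 0] (0:ℝ) :=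
        mem_nhdsWithin.mpr ⟨Iio 1, isOpen_Iio, by norm_num, fun z hz => ⟨hz.2, hz.1.le⟩⟩
      have hd0 := hFd 0 0 ⟨le_rfl, by norm_num⟩
      simp only [Nat.cast_zero, zero_add] at hd0
      have hd1 : HasDerivWithinAt (F 0) (Vf a b c ε K 0 (F 0 0)) (Ici 0) 0 :=
        hd0.mono_of_mem_nhdsWithin hIcc1
      have hev : sol =ᶠ[𝓝[Ici 0] (0:ℝ)] F 0 := by
        filter_upwards [hIcc1] with z hz
        exact hsolk 0 z hz.1 (by simp only [Nat.cast_zero, zero_add]; exact hz.2)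
      exact (hd1.congr_of_eventuallyEq hev (by rw [hsol0, hF0])).differentiableWithinAt
    · exact ((hsolDeriv y h0).differentiableAt).differentiableWithinAt
  refine ⟨sol, hdiff, hsol0, ?_, ?_, ?_⟩
  · intro y hy
    rw [← hclsol y hy.le]
    exact hsolDeriv y hy
  · -- strict antitonicity
    have hcontOn : ContinuousOn sol (Ici 0) := hdiff.continuousOn
    have hanti : AntitoneOn sol (Ici 0) := by
      apply antitoneOn_of_deriv_nonpos (convex_Ici 0) hcontOn
      · intro y hy
        rw [interior_Ici] at hy
        exact ((hsolDeriv y hy).differentiableAt).differentiableWithinAt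
      · intro y hy
        rw [interior_Ici] at hy
        rw [(hsolDeriv y hy).deriv]
        exact Vf_nonpos ha hb hc hq hy.le
    intro s hs t ht hst
    rcases lt_or_ge (sol t) (sol s) with h | h
    · exact h
    exfalso
    have heq : sol s = sol t := le_antisymm h (hanti hs ht hst.le)
    have hconst : ∀ r ∈ Icc s t, sol r = sol s := by
      intro r hr
      have h1 : sol r ≤ sol s := hanti hs (le_trans hs hr.1) hr.1
      have h2 : sol t ≤ sol r := hanti (le_trans hs hr.1) ht hr.2
      rw [← heq] at h2
      linarith
    have hHHr : ∀ r ∈ Ioo s t, HH a r = sol r := by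
      intro r hr
      have hr0 : (0:ℝ) < r := lt_of_le_of_lt hs hr.1
      have hevc : sol =ᶠ[𝓝 r] fun _ => sol s := by
        filter_upwards [isOpen_Ioo.mem_nhds hr] with z hz
        exact hconst z ⟨hz.1.le, hz.2.le⟩
      have hd0 : HasDerivAt sol 0 r :=
        (hasDerivAt_const r (sol s)).congr_of_eventuallyEq hevc
      have hVf0 : Vf a b c ε K r (sol r) = 0 := (hsolDeriv r hr0).unique hd0
      rw [hclsol r hr0.le] at hVf0
      by_contra hne
      have hgt : HH a r < sol r :=
        lt_of_le_of_ne (le_trans HH_le_lb (hsolmem r hr0.le).1) hne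
      exact absurd hVf0 (ne_of_lt (FF_neg ha hb hc hq hr0.le hgt (Or.inr hr0)))
    have h13 : s + (t - s)/3 ∈ Ioo s t := by constructor <;> linarith
    have h23 : s + 2*(t - s)/3 ∈ Ioo s t := by constructor <;> linarith
    have hH1 := hHHr _ h13
    have hH2 := hHHr _ h23
    have hc1 := hconst _ (Ioo_subset_Icc_self h13)
    have hc2 := hconst _ (Ioo_subset_Icc_self h23)
    have : HH a (s + (t - s)/3) = HH a (s + 2*(t - s)/3) := by
      rw [hH1, hH2, hc1, hc2]
    have hs0 : (0:ℝ) ≤ s := hs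
    have hmono := HH_strictAnti ha (show s + (t-s)/3 ∈ Ici (0:ℝ) by
        simp only [mem_Ici]; linarith)
      (show s + 2*(t-s)/3 ∈ Ici (0:ℝ) by simp only [mem_Ici]; linarith)
      (by linarith)
    rw [this] at hmono
    exact lt_irrefl _ hmono
  · intro y hy
    exact ⟨le_trans HH_le_lb (hsolmem y hy).1, (hsolmem y hy).2⟩


end EinsteinAux

/-- For every `ε ∈ (0,1)` there is a differentiable solution `x` of `x' = F(x, ·)` on `[0, ∞)`
with `x 0 = 1 + ε`, strictly decreasing, trapped between `h` and `1 + ε`. -/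
theorem exists_solution_above (n : ℕ) (hn : 3 ≤ n) (m ρ : ℝ) (hm : m = (n : ℝ) - 1)
    (hρ : ρ < 1 / (2 * m)) (ε : ℝ) (hε : ε ∈ Set.Ioo (0 : ℝ) 1) :
    ∃ x : ℝ → ℝ, DifferentiableOn ℝ x (Set.Ici 0) ∧ x 0 = 1 + ε ∧
      (∀ y > (0 : ℝ), HasDerivAt x (einsteinF m ρ (x y) y) y) ∧
      StrictAntiOn x (Set.Ici 0) ∧
      (∀ y ≥ (0 : ℝ), einsteinH m ρ y ≤ x y ∧ x y ≤ 1 + ε) := by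
  obtain ⟨hεpos, hεlt⟩ := hε
  have hm2 : (2:ℝ) ≤ m := by
    rw [hm]
    have h3 : (3:ℝ) ≤ (n:ℝ) := by exact_mod_cast hn
    linarith
  have hm0 : (0:ℝ) < m := by linarith
  have hmρ : 2 * m * ρ < 1 := by
    have h2m : (0:ℝ) < 2 * m := by linarith
    have h1 : ρ * (2 * m) < 1 := (lt_div_iff₀ h2m).mp hρ
    calc 2 * m * ρ = ρ * (2 * m) := by ring
      _ < 1 := h1
  have hmρ' : m * ρ < 1 / 2 := by linarith
  have ha : 0 < (m - 1) * (1 - m * ρ) := mul_pos (by linarith) (by linarith)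
  have hc1 : (m + 1) * ρ < 1 := by
    rcases le_or_gt ρ 0 with h | h
    · nlinarith
    · nlinarith [mul_pos (show (0:ℝ) < m - 1 by linarith) h]
  have hb : 0 < m * (m - 1) * (1 - (m + 1) * ρ) :=
    mul_pos (mul_pos (by linarith) (by linarith)) (by linarith)
  have hcc : 0 < 1 + m - 4 * m * ρ := by linarith
  have hq : m * (m - 1) * (1 - (m + 1) * ρ) <
      ((m - 1) * (1 - m * ρ)) * (1 + m - 4 * m * ρ) := by
    have hid : ((m - 1) * (1 - m * ρ)) * (1 + m - 4 * m * ρ) -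
        m * (m - 1) * (1 - (m + 1) * ρ) = (m - 1) * (1 - 2 * m * ρ) ^ 2 := by ring
    have hpos : 0 < (m - 1) * (1 - 2 * m * ρ) ^ 2 :=
      mul_pos (by linarith) (pow_pos (by linarith) 2)
    linarith
  obtain ⟨x, h1, h2, h3, h4, h5⟩ :=
    EinsteinAux.main_aux ((m - 1) * (1 - m * ρ)) (m * (m - 1) * (1 - (m + 1) * ρ))
      (1 + m - 4 * m * ρ) ε ha hb hcc hq hεpos hεlt
  refine ⟨x, h1, h2, ?_, h4, ?_⟩
  · intro y hy
    have hde := h3 y hy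
    have heqF : einsteinF m ρ (x y) y =
        EinsteinAux.FF ((m - 1) * (1 - m * ρ)) (m * (m - 1) * (1 - (m + 1) * ρ))
          (1 + m - 4 * m * ρ) (x y) y := by
      unfold einsteinF EinsteinAux.FF EinsteinAux.NN EinsteinAux.DD
      congr 1
    rw [heqF]
    exact hde
  · intro y hy
    have h5' := h5 y hy
    refine ⟨?_, h5'.2⟩
    have heqH : einsteinH m ρ y = EinsteinAux.HH ((m - 1) * (1 - m * ρ)) y := by
      unfold einsteinH EinsteinAux.HH
      rw [show y ^ 2 + 4 * (m - 1) ^ 2 * (1 - m * ρ) ^ 2 =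
        y ^ 2 + 4 * ((m - 1) * (1 - m * ρ)) ^ 2 by ring]
      congr 1
      ring
    rw [heqH]
    exact h5'.1
end

section
/- Suppose x₁, x₂ : [0, ∞) → ℝ are differentiable, satisfy xᵢ′(y) = F(xᵢ(y), y) for all y > 0, satisfy h(y) ≤ xᵢ(y) for all y ≥ 0 (i = 1, 2), and 1 < x₁(0) < x₂(0). Then x₁(y) < x₂(y) for every y ≥ 0. -/
lemma einstein_denom_pos (m ρ x y : ℝ) (hm2 : 2 ≤ m) (hρ2 : 2*m*ρ < 1) (hy : 0 < y)
    (hx : einsteinH m ρ y ≤ x) :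
    0 < -(m * (m - 1) * (1 - (m + 1) * ρ) * (1 - x ^ 2)) + (1 + m - 4 * m * ρ) * x * y := by
  have ha : 0 < (m-1)*(1-m*ρ) := by nlinarith
  have hs0 : 0 ≤ Real.sqrt (y^2+4*(m-1)^2*(1-m*ρ)^2) := Real.sqrt_nonneg _
  have hs2 : Real.sqrt (y^2+4*(m-1)^2*(1-m*ρ)^2)^2 = y^2+4*(m-1)^2*(1-m*ρ)^2 :=
    Real.sq_sqrt (by positivity)
  have hx' : Real.sqrt (y^2+4*(m-1)^2*(1-m*ρ)^2) ≤ 2*(m-1)*(1-m*ρ)*x + y := by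
    rw [einsteinH, div_le_iff₀ (by linarith : (0:ℝ) < 2*(m-1)*(1-m*ρ))] at hx
    linarith
  have hxy : (m-1)*(1-m*ρ)*(1-x^2) ≤ x*y := by
    have h1 := mul_self_le_mul_self hs0 hx'
    nlinarith [h1, hs2, ha]
  have hc' : 0 < 1+m-4*m*ρ := by linarith
  rcases lt_or_ge x 1 with hx1 | hx1
  · have hx2 : 0 < 1 - x^2 := by
      have hxpos : 0 < x := by
        have hnum : 0 < -y + Real.sqrt (y^2+4*(m-1)^2*(1-m*ρ)^2) := by nlinarith
        calc (0:ℝ) < einsteinH m ρ y := by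
              rw [einsteinH]; exact div_pos hnum (by linarith)
          _ ≤ x := hx
      nlinarith
    have h1 : (1+m-4*m*ρ)*((m-1)*(1-m*ρ)*(1-x^2)) ≤ (1+m-4*m*ρ)*(x*y) :=
      mul_le_mul_of_nonneg_left hxy hc'.le
    have h2 : 0 < (m-1)*((1-2*m*ρ)^2*(1-x^2)) := by
      have h3 : 0 < 1-2*m*ρ := by linarith
      exact mul_pos (by linarith : (0:ℝ) < m-1) (mul_pos (pow_pos h3 2) hx2)
    nlinarith [h1, h2]
  · have hρm : 0 < 1-(m+1)*ρ := by nlinarith [mul_pos (show (0:ℝ) < m+1 by linarith) (show (0:ℝ) < 1-2*m*ρ by linarith)]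
    have t1 : 0 ≤ m*(m-1)*(1-(m+1)*ρ)*(x^2-1) := by
      have : (0:ℝ) ≤ x^2-1 := by nlinarith
      have : (0:ℝ) ≤ m*(m-1)*(1-(m+1)*ρ) := by nlinarith
      nlinarith
    have t2 : 0 < (1+m-4*m*ρ)*x*y := by
      have hxp : (0:ℝ) < x := by linarith
      exact mul_pos (mul_pos hc' hxp) hy
    nlinarith [t1, t2]
/-- Comparison of solutions of `x' = F(x, ·)` staying above the barrier `h`: solutions
ordered at `y = 0` (both above `1`) stay ordered for all `y ≥ 0`. -/
theorem solutions_ordered (n : ℕ) (hn : 3 ≤ n) (m ρ : ℝ) (hm : m = (n : ℝ) - 1)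
    (hρ : ρ < 1 / (2 * m)) (x₁ x₂ : ℝ → ℝ)
    (hd₁ : DifferentiableOn ℝ x₁ (Set.Ici 0)) (hd₂ : DifferentiableOn ℝ x₂ (Set.Ici 0))
    (hode₁ : ∀ y > (0 : ℝ), HasDerivAt x₁ (einsteinF m ρ (x₁ y) y) y)
    (hode₂ : ∀ y > (0 : ℝ), HasDerivAt x₂ (einsteinF m ρ (x₂ y) y) y)
    (hbar₁ : ∀ y ≥ (0 : ℝ), einsteinH m ρ y ≤ x₁ y)
    (hbar₂ : ∀ y ≥ (0 : ℝ), einsteinH m ρ y ≤ x₂ y)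
    (h0 : 1 < x₁ 0) (h12 : x₁ 0 < x₂ 0) :
    ∀ y ≥ (0 : ℝ), x₁ y < x₂ y := by
  have hm2 : (2:ℝ) ≤ m := by
    have : (3:ℝ) ≤ (n:ℝ) := by exact_mod_cast hn
    rw [hm]; linarith
  have h2m : (0:ℝ) < 2*m := by linarith
  have hρ2 : 2*m*ρ < 1 := by
    have h' := (lt_div_iff₀ h2m).mp hρ
    nlinarith [h']
  by_contra hcon
  push_neg at hcon
  obtain ⟨yb, hyb, hyble⟩ := hcon
  set T : Set ℝ := {y | 0 ≤ y ∧ x₂ y ≤ x₁ y} with hT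
  have hTne : T.Nonempty := ⟨yb, hyb, hyble⟩
  have hcont : ContinuousOn (fun y => x₂ y - x₁ y) (Set.Ici 0) :=
    (hd₂.sub hd₁).continuousOn
  have hTclosed : IsClosed T := by
    have hTeq : T = Set.Ici 0 ∩ (fun y => x₂ y - x₁ y) ⁻¹' Set.Iic 0 := by
      ext y
      simp only [hT, Set.mem_setOf_eq, Set.mem_inter_iff, Set.mem_Ici, Set.mem_preimage,
        Set.mem_Iic, sub_nonpos]
    rw [hTeq]
    exact hcont.preimage_isClosed_of_isClosed isClosed_Ici isClosed_Iic
  have hTbdd : BddBelow T := ⟨0, fun y hy => hy.1⟩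
  set y₀ := sInf T with hy₀def
  have hy₀T : y₀ ∈ T := hTclosed.csInf_mem hTne hTbdd
  have hy₀0 : 0 ≤ y₀ := hy₀T.1
  have hlt : ∀ y, 0 ≤ y → y < y₀ → x₁ y < x₂ y := by
    intro y hy hyy
    by_contra hle
    push_neg at hle
    exact absurd (csInf_le hTbdd ⟨hy, hle⟩) (not_le.2 hyy)
  have hy₀pos : 0 < y₀ := by
    rcases hy₀0.lt_or_eq with h | h
    · exact h
    · exfalso; have := hy₀T.2; rw [← h] at this; linarith
  have hc1 : ContinuousAt x₁ y₀ := (hode₁ y₀ hy₀pos).continuousAt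
  have hc2 : ContinuousAt x₂ y₀ := (hode₂ y₀ hy₀pos).continuousAt
  have heq : x₁ y₀ = x₂ y₀ := by
    have hle : x₂ y₀ ≤ x₁ y₀ := hy₀T.2
    have hge : x₁ y₀ ≤ x₂ y₀ := by
      have htend : Filter.Tendsto (fun y => x₂ y - x₁ y) (nhdsWithin y₀ (Set.Ioo 0 y₀))
          (nhds (x₂ y₀ - x₁ y₀)) :=
        ((hc2.sub hc1).continuousWithinAt)
      have hne : (nhdsWithin y₀ (Set.Ioo 0 y₀)).NeBot := right_nhdsWithin_Ioo_neBot hy₀pos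
      have hev : ∀ᶠ y in nhdsWithin y₀ (Set.Ioo 0 y₀), 0 ≤ x₂ y - x₁ y := by
        filter_upwards [self_mem_nhdsWithin] with y hy
        exact sub_nonneg.mpr (hlt y hy.1.le hy.2).le
      have := ge_of_tendsto htend hev
      linarith
    linarith
  set x₀ := x₁ y₀ with hx₀def
  have hden : 0 < -(m * (m - 1) * (1 - (m + 1) * ρ) * (1 - x₀ ^ 2)) + (1 + m - 4 * m * ρ) * x₀ * y₀ :=
    einstein_denom_pos m ρ x₀ y₀ hm2 hρ2 hy₀pos (hbar₁ y₀ hy₀0)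
  have hcd : ContDiffAt ℝ 1 (fun p : ℝ × ℝ => einsteinF m ρ p.1 p.2) (x₀, y₀) := by
    simp only [einsteinF]
    apply ContDiffAt.div
    · fun_prop
    · fun_prop
    · exact ne_of_gt hden
  obtain ⟨K, t, ht, hlip⟩ := hcd.exists_lipschitzOnWith
  obtain ⟨ε, hε, hball⟩ := Metric.mem_nhds_iff.mp ht
  -- slice lipschitz
  have hslice : ∀ y : ℝ, dist y y₀ < ε →
      LipschitzOnWith K (fun x => einsteinF m ρ x y) (Metric.ball x₀ ε) := by
    intro y hyε
    intro x hx x' hx'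
    have hmem : (x, y) ∈ t := hball (by
      rw [Metric.mem_ball, Prod.dist_eq, max_lt_iff]
      exact ⟨hx, hyε⟩)
    have hmem' : (x', y) ∈ t := hball (by
      rw [Metric.mem_ball, Prod.dist_eq, max_lt_iff]
      exact ⟨hx', hyε⟩)
    have := hlip hmem hmem'
    calc edist (einsteinF m ρ x y) (einsteinF m ρ x' y)
        ≤ K * edist ((x, y) : ℝ × ℝ) (x', y) := this
      _ = K * edist x x' := by
          rw [Prod.edist_eq]
          simp
  -- eventual membership
  have hev1 : ∀ᶠ y in nhds y₀, x₁ y ∈ Metric.ball x₀ ε :=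
    hc1 (Metric.isOpen_ball.mem_nhds (Metric.mem_ball_self hε))
  have hev2 : ∀ᶠ y in nhds y₀, x₂ y ∈ Metric.ball x₀ ε := by
    have : x₂ y₀ ∈ Metric.ball x₀ ε := by
      rw [heq]; exact Metric.mem_ball_self hε
    exact hc2 (Metric.isOpen_ball.mem_nhds this)
  have hev3 : ∀ᶠ y in nhds y₀, dist y y₀ < ε :=
    Metric.eventually_nhds_iff.mpr ⟨ε, hε, fun {y} h => h⟩
  obtain ⟨δ, hδ, hδall⟩ := Metric.eventually_nhds_iff.mp ((hev1.and hev2).and hev3)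
  set δ' := min δ y₀ with hδ'def
  have hδ'pos : 0 < δ' := lt_min hδ hy₀pos
  set a := y₀ - δ'/2 with hadef
  have hapos : 0 < a := by
    have : δ' ≤ y₀ := min_le_right _ _
    rw [hadef]; linarith
  have hay : a < y₀ := by rw [hadef]; linarith
  have hdist : ∀ s : ℝ, s ∈ Set.Icc a y₀ → dist s y₀ < δ := by
    intro s hs
    rw [Real.dist_eq, abs_sub_lt_iff]
    constructor
    · linarith [hs.2, hδ'pos]
    · have : δ' ≤ δ := min_le_left _ _
      have := hs.1
      rw [hadef] at this
      linarith
  classical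
  set sset : ℝ → Set ℝ := fun s => if dist s y₀ < δ then Metric.ball x₀ ε else ∅ with hsset
  have hv : ∀ s, LipschitzOnWith K (fun x => einsteinF m ρ x s) (sset s) := by
    intro s
    by_cases h : dist s y₀ < δ
    · rw [hsset]; simp only [if_pos h]
      exact hslice s (hδall h).2
    · rw [hsset]; simp only [if_neg h]
      exact lipschitzOnWith_empty _ _
  have hEq : Set.EqOn x₁ x₂ (Set.Icc a y₀) := by
    apply ODE_solution_unique_of_mem_Icc_left (a := a) (b := y₀) (fun s _ => hv s)
    · exact fun s hs => ((hode₁ s (lt_of_lt_of_le hapos hs.1)).continuousAt).continuousWithinAt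
    · exact fun s hs => (hode₁ s (lt_of_lt_of_le hapos hs.1.le)).hasDerivWithinAt
    · intro s hs
      have hd := hdist s (Set.Ioc_subset_Icc_self hs)
      rw [hsset]; simp only [if_pos hd]
      exact ((hδall hd).1).1
    · exact fun s hs => ((hode₂ s (lt_of_lt_of_le hapos hs.1)).continuousAt).continuousWithinAt
    · exact fun s hs => (hode₂ s (lt_of_lt_of_le hapos hs.1.le)).hasDerivWithinAt
    · intro s hs
      have hd := hdist s (Set.Ioc_subset_Icc_self hs)
      rw [hsset]; simp only [if_pos hd]
      exact ((hδall hd).1).2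
    · exact heq
  have := hEq (Set.mem_Icc.mpr ⟨le_refl a, hay.le⟩)
  have := hlt a hapos.le hay
  rw [‹x₁ a = x₂ a›] at this
  exact lt_irrefl _ this
end

section
/- There exists a differentiable function x̄ : (0, ∞) → ℝ such that x̄′(y) = F(x̄(y), y) for all y > 0, h(y) ≤ x̄(y) ≤ 1 for all y > 0, and x̄(y) → 1 as y → 0⁺. -/
open Set Real Filter Topology

namespace Einstein

noncomputable def FF (A B E x y : ℝ) : ℝ :=
  (A * (1 - x ^ 2) - x * y) / (-(B * (1 - x ^ 2)) + E * x * y)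

noncomputable def ss (A y : ℝ) : ℝ := Real.sqrt (y ^ 2 + 4 * A ^ 2)

noncomputable def hh (A y : ℝ) : ℝ := (-y + ss A y) / (2 * A)

noncomputable def pj (A y x : ℝ) : ℝ := max (hh A y) (min x 1)

noncomputable def vv (A B E y x : ℝ) : ℝ := FF A B E (pj A y x) y

variable {A B E : ℝ}

lemma ss_sq (hA : 0 < A) (y : ℝ) : ss A y ^ 2 = y ^ 2 + 4 * A ^ 2 := by
  have : (0:ℝ) ≤ y ^ 2 + 4 * A ^ 2 := by positivity
  simpa [ss] using Real.sq_sqrt this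

lemma abs_lt_ss (hA : 0 < A) (y : ℝ) : |y| < ss A y := by
  have h1 : |y| = Real.sqrt (y ^ 2) := by rw [Real.sqrt_sq_eq_abs]
  rw [h1, ss]
  apply Real.sqrt_lt_sqrt (by positivity)
  nlinarith

lemma ss_pos (hA : 0 < A) (y : ℝ) : 0 < ss A y :=
  lt_of_le_of_lt (abs_nonneg y) (abs_lt_ss hA y)

lemma hh_pos (hA : 0 < A) (y : ℝ) : 0 < hh A y := by
  have h := abs_lt_ss hA y
  have : y < ss A y := lt_of_le_of_lt (le_abs_self y) h
  have h2 : 0 < -y + ss A y := by linarith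
  exact div_pos h2 (by positivity)

lemma hh_eq (hA : 0 < A) (y : ℝ) : A * (1 - hh A y ^ 2) = hh A y * y := by
  have hs := ss_sq hA y
  rw [hh]
  field_simp
  nlinarith [hs]

lemma hh_le_one (hA : 0 < A) {y : ℝ} (hy : 0 ≤ y) : hh A y ≤ 1 := by
  have he := hh_eq hA y
  have hp := hh_pos hA y
  by_contra hc
  push_neg at hc
  have h1 : 0 < hh A y - 1 := by linarith
  have h2 : 0 < hh A y + 1 := by linarith
  nlinarith [mul_nonneg hp.le hy, mul_pos h1 h2]

lemma hh_lt_one (hA : 0 < A) {y : ℝ} (hy : 0 < y) : hh A y < 1 := by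
  have he := hh_eq hA y
  have hp := hh_pos hA y
  by_contra hc
  push_neg at hc
  have h1 : 0 ≤ hh A y - 1 := by linarith
  have h2 : 0 < hh A y + 1 := by linarith
  nlinarith [mul_pos hp hy, mul_nonneg h1 h2.le]

lemma hh_alt (hA : 0 < A) (y : ℝ) : hh A y = 2 * A / (y + ss A y) := by
  have hs := ss_sq hA y
  have hys : 0 < y + ss A y := by
    have := abs_lt_ss hA y
    have : -y < ss A y := lt_of_le_of_lt (neg_le_abs y) this
    linarith
  rw [hh]
  field_simp
  nlinarith [hs]

lemma hh_anti (hA : 0 < A) {y₁ y₂ : ℝ} (h1 : 0 ≤ y₁) (h12 : y₁ < y₂) :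
    hh A y₂ < hh A y₁ := by
  rw [hh_alt hA, hh_alt hA]
  have hs1 : 0 < y₁ + ss A y₁ := by
    have := ss_pos hA y₁; linarith
  have hs12 : ss A y₁ ≤ ss A y₂ := by
    apply Real.sqrt_le_sqrt; nlinarith
  have hs2 : y₁ + ss A y₁ < y₂ + ss A y₂ := by linarith
  exact div_lt_div_of_pos_left (by positivity) hs1 hs2

lemma hh_antitone (hA : 0 < A) {y₁ y₂ : ℝ} (h1 : 0 ≤ y₁) (h12 : y₁ ≤ y₂) :
    hh A y₂ ≤ hh A y₁ := by
  rcases eq_or_lt_of_le h12 with rfl | h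
  · exact le_refl _
  · exact (hh_anti hA h1 h).le

lemma hh_cont (hA : 0 < A) : Continuous (hh A) := by
  unfold hh ss
  fun_prop

lemma hh_zero (hA : 0 < A) : hh A 0 = 1 := by
  rw [hh, ss]
  have : Real.sqrt ((0:ℝ) ^ 2 + 4 * A ^ 2) = 2 * A := by
    rw [show (0:ℝ) ^ 2 + 4 * A ^ 2 = (2*A)^2 by ring]
    exact Real.sqrt_sq (by positivity)
  rw [this]
  field_simp
  ring

/-- In the region `x ≥ h(y)`, the numerator of `F` is nonpositive. -/
lemma num_nonpos (hA : 0 < A) {x y : ℝ} (hy : 0 ≤ y) (hx : hh A y ≤ x) :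
    A * (1 - x ^ 2) ≤ x * y := by
  have he := hh_eq hA y
  have hp := hh_pos hA y
  nlinarith [mul_nonneg (sub_nonneg.mpr hx) (add_nonneg (by nlinarith : (0:ℝ) ≤ A * (x + hh A y)) hy)]

/-- Quantitative lower bound for the denominator of `F` in the region. -/
lemma denom_ge (hA : 0 < A) (hB : 0 < B) {x y : ℝ} (hy : 0 ≤ y) (hx : hh A y ≤ x) :
    (A * E - B) / A * (x * y) ≤ -(B * (1 - x ^ 2)) + E * x * y := by
  have hn := num_nonpos hA hy hx
  rw [div_mul_eq_mul_div, div_le_iff₀ hA]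
  nlinarith

lemma denom_pos (hA : 0 < A) (hB : 0 < B) (hBE : B < A * E) {x y : ℝ} (hy : 0 < y)
    (hx : hh A y ≤ x) : 0 < -(B * (1 - x ^ 2)) + E * x * y := by
  refine lt_of_lt_of_le ?_ (denom_ge hA hB hy.le hx)
  have hxp : 0 < x := lt_of_lt_of_le (hh_pos hA y) hx
  have : 0 < A * E - B := by linarith
  positivity

/-- `F ≤ 0` in the region. -/
lemma FF_nonpos (hA : 0 < A) (hB : 0 < B) (hBE : B < A * E) {x y : ℝ} (hy : 0 < y)
    (hx : hh A y ≤ x) : FF A B E x y ≤ 0 :=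
  div_nonpos_of_nonpos_of_nonneg (by linarith [num_nonpos hA hy.le hx])
    (denom_pos hA hB hBE hy hx).le

/-- `F ≥ -A/(AE - B)` in the region. -/
lemma FF_ge (hA : 0 < A) (hB : 0 < B) (hBE : B < A * E) {x y : ℝ} (hy : 0 < y)
    (hx : hh A y ≤ x) (hx1 : x ≤ 1) : -(A / (A * E - B)) ≤ FF A B E x y := by
  have hden := denom_pos hA hB hBE hy hx
  have hdge := denom_ge hA hB (E := E) hy.le hx
  have hxp : 0 < x := lt_of_lt_of_le (hh_pos hA y) hx
  have hEB : 0 < A * E - B := by linarith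
  have hM : 0 < A / (A * E - B) := by positivity
  rw [FF, le_div_iff₀ hden]
  have h2 : A / (A * E - B) * ((A * E - B) / A * (x * y)) = x * y := by
    field_simp
  have h3 : 0 ≤ A * (1 - x ^ 2) :=
    mul_nonneg hA.le (by nlinarith [mul_nonneg (sub_nonneg.mpr hx1) (by linarith : (0:ℝ) ≤ 1 + x)])
  have h4 := mul_le_mul_of_nonneg_left hdge hM.le
  rw [h2] at h4
  linarith

lemma FF_one (hE : 0 < E) {y : ℝ} (hy : 0 < y) : FF A B E 1 y = -(1 / E) := by
  rw [FF]
  rw [show (1:ℝ) - 1 ^ 2 = 0 by ring]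
  rw [show A * 0 - 1 * y = -y by ring, show -(B * 0) + E * 1 * y = E * y by ring]
  rw [div_eq_iff (by positivity)]
  field_simp

lemma FF_hh (hA : 0 < A) (y : ℝ) : FF A B E (hh A y) y = 0 := by
  rw [FF, show A * (1 - hh A y ^ 2) - hh A y * y = 0 by linarith [hh_eq hA y],
    zero_div]

lemma pj_le_one (hA : 0 < A) {y : ℝ} (hy : 0 ≤ y) (x : ℝ) : pj A y x ≤ 1 :=
  max_le (hh_le_one hA hy) (min_le_right x 1)

lemma hh_le_pj (x y : ℝ) : hh A y ≤ pj A y x := le_max_left _ _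

lemma pj_eq_self {x y : ℝ} (hx : hh A y ≤ x) (hx1 : x ≤ 1) : pj A y x = x := by
  rw [pj, min_eq_left hx1, max_eq_right hx]

lemma pj_eq_one (hA : 0 < A) {x y : ℝ} (hy : 0 ≤ y) (hx : 1 ≤ x) : pj A y x = 1 := by
  rw [pj, min_eq_right hx, max_eq_right (hh_le_one hA hy)]

lemma pj_eq_hh (hA : 0 < A) {x y : ℝ} (hy : 0 ≤ y) (hx : x ≤ hh A y) : pj A y x = hh A y := by
  rw [pj, min_eq_left (le_trans hx (hh_le_one hA hy)), max_eq_left hx]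

lemma vv_eq_FF {x y : ℝ} (hx : hh A y ≤ x) (hx1 : x ≤ 1) :
    vv A B E y x = FF A B E x y := by rw [vv, pj_eq_self hx hx1]

lemma vv_nonpos (hA : 0 < A) (hB : 0 < B) (hBE : B < A * E) {y : ℝ} (hy : 0 < y) (x : ℝ) :
    vv A B E y x ≤ 0 :=
  FF_nonpos hA hB hBE hy (hh_le_pj x y)

lemma vv_ge (hA : 0 < A) (hB : 0 < B) (hBE : B < A * E) {y : ℝ} (hy : 0 < y) (x : ℝ) :
    -(A / (A * E - B)) ≤ vv A B E y x :=
  FF_ge hA hB hBE hy (hh_le_pj x y) (pj_le_one hA hy.le x)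

lemma abs_vv_le (hA : 0 < A) (hB : 0 < B) (hBE : B < A * E) {y : ℝ} (hy : 0 < y) (x : ℝ) :
    |vv A B E y x| ≤ A / (A * E - B) := by
  rw [abs_le]
  exact ⟨by simpa using vv_ge hA hB hBE hy x, le_trans (vv_nonpos hA hB hBE hy x)
    (div_pos hA (by linarith)).le⟩

lemma hasDerivAt_FF {x y : ℝ} (hden : -(B * (1 - x ^ 2)) + E * x * y ≠ 0) :
    HasDerivAt (fun u : ℝ => FF A B E u y)
      (((-(2 * A * x) - y) * (-(B * (1 - x ^ 2)) + E * x * y) -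
          (A * (1 - x ^ 2) - x * y) * (2 * B * x + E * y)) /
        (-(B * (1 - x ^ 2)) + E * x * y) ^ 2) x := by
  have hx2 : HasDerivAt (fun u : ℝ => u ^ 2) (2 * x) x := by
    simpa using hasDerivAt_pow 2 x
  have h1 : HasDerivAt (fun u : ℝ => 1 - u ^ 2) (0 - 2 * x) x :=
    (hasDerivAt_const x (1 : ℝ)).sub hx2
  have hN : HasDerivAt (fun u : ℝ => A * (1 - u ^ 2) - u * y) (-(2 * A * x) - y) x := by
    have h2 := (h1.const_mul A).sub ((hasDerivAt_id x).mul_const y)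
    rw [show -(2 * A * x) - y = A * (0 - 2 * x) - 1 * y by ring]
    exact h2
  have hD : HasDerivAt (fun u : ℝ => -(B * (1 - u ^ 2)) + E * u * y) (2 * B * x + E * y) x := by
    have h2 := ((h1.const_mul B).neg).add (((hasDerivAt_id x).const_mul E).mul_const y)
    rw [show 2 * B * x + E * y = -(B * (0 - 2 * x)) + E * 1 * y by ring]
    exact h2
  exact hN.div hD hden

/-- The uniform Lipschitz constant on the slab `ε ≤ y ≤ Y`. -/
noncomputable def Kc (A B E eps Y : ℝ) : ℝ :=
  ((2 * A + Y) * (B + E * Y) + (A + Y) * (2 * B + E * Y)) /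
    ((A * E - B) / A * (hh A Y * eps)) ^ 2

lemma lipschitzOnWith_FF (hA : 0 < A) (hB : 0 < B) (hE : 0 < E) (hBE : B < A * E)
    {eps Y y : ℝ} (heps : 0 < eps) (hy : y ∈ Icc eps Y) :
    LipschitzOnWith (Real.toNNReal (Kc A B E eps Y)) (fun x => FF A B E x y)
      (Icc (hh A y) 1) := by
  have hε : 0 < y := lt_of_lt_of_le heps hy.1
  have hεY : eps ≤ Y := le_trans hy.1 hy.2
  have hY : 0 < Y := lt_of_lt_of_le heps hεY
  have hEB : 0 < A * E - B := by linarith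
  set d0 : ℝ := (A * E - B) / A * (hh A Y * eps) with hd0
  have hd0pos : 0 < d0 :=
    mul_pos (div_pos hEB hA) (mul_pos (hh_pos hA Y) heps)
  have key : ∀ x ∈ Icc (hh A y) 1,
      |((-(2 * A * x) - y) * (-(B * (1 - x ^ 2)) + E * x * y) -
          (A * (1 - x ^ 2) - x * y) * (2 * B * x + E * y)) /
        (-(B * (1 - x ^ 2)) + E * x * y) ^ 2| ≤ Kc A B E eps Y := by
    intro x hx
    have hxl : hh A y ≤ x := hx.1
    have hx1 : x ≤ 1 := hx.2
    have hxp : 0 < x := lt_of_lt_of_le (hh_pos hA y) hxl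
    have hyY : y ≤ Y := hy.2
    have hεy : eps ≤ y := hy.1
    have hden := denom_pos hA hB hBE hε hxl
    have hdge : d0 ≤ -(B * (1 - x ^ 2)) + E * x * y := by
      refine le_trans ?_ (denom_ge hA hB hε.le hxl)
      rw [hd0]
      exact mul_le_mul_of_nonneg_left
        (mul_le_mul (le_trans (hh_antitone hA hε.le hyY) hxl) hεy heps.le hxp.le)
        (div_pos hEB hA).le
    have hx2 : 0 ≤ 1 - x ^ 2 := by
      nlinarith [mul_nonneg (sub_nonneg.mpr hx1) (by linarith : (0:ℝ) ≤ 1 + x)]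
    have hx2' : 1 - x ^ 2 ≤ 1 := by nlinarith
    have hxy : 0 < x * y := mul_pos hxp hε
    have hxyY : x * y ≤ Y := by nlinarith
    have hb1 : 0 ≤ B * (1 - x ^ 2) := mul_nonneg hB.le hx2
    have hb2 : B * (1 - x ^ 2) ≤ B := mul_le_of_le_one_right hB.le hx2'
    have ha1 : 0 ≤ A * (1 - x ^ 2) := mul_nonneg hA.le hx2
    have ha2 : A * (1 - x ^ 2) ≤ A := mul_le_of_le_one_right hA.le hx2'
    have he1 : 0 < E * x * y := by nlinarith [mul_pos hE hxy]
    have he2 : E * x * y ≤ E * Y := by nlinarith [mul_le_mul_of_nonneg_left hxyY hE.le]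
    have hax : 0 ≤ 2 * A * x := by positivity
    have hax' : 2 * A * x ≤ 2 * A := by nlinarith
    have hbx : 0 ≤ 2 * B * x := by positivity
    have hbx' : 2 * B * x ≤ 2 * B := by nlinarith
    have hey : 0 < E * y := mul_pos hE hε
    have hey' : E * y ≤ E * Y := mul_le_mul_of_nonneg_left hyY hE.le
    have e1 : |(-(2 * A * x) - y)| ≤ 2 * A + Y := by
      rw [abs_le]; constructor <;> linarith
    have e2 : |(-(B * (1 - x ^ 2)) + E * x * y)| ≤ B + E * Y := by
      rw [abs_le]; constructor <;> linarith
    have e3 : |(A * (1 - x ^ 2) - x * y)| ≤ A + Y := by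
      rw [abs_le]; constructor <;> linarith
    have e4 : |(2 * B * x + E * y)| ≤ 2 * B + E * Y := by
      rw [abs_le]; constructor <;> linarith
    have e5 : |(-(2 * A * x) - y) * (-(B * (1 - x ^ 2)) + E * x * y) -
        (A * (1 - x ^ 2) - x * y) * (2 * B * x + E * y)| ≤
        (2 * A + Y) * (B + E * Y) + (A + Y) * (2 * B + E * Y) := by
      refine le_trans (abs_sub _ _) ?_
      rw [abs_mul, abs_mul]
      exact add_le_add
        (mul_le_mul e1 e2 (abs_nonneg _) (by positivity))
        (mul_le_mul e3 e4 (abs_nonneg _) (by positivity))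
    have e6 : d0 ^ 2 ≤ (-(B * (1 - x ^ 2)) + E * x * y) ^ 2 :=
      pow_le_pow_left₀ hd0pos.le hdge 2
    have hD2 : |(-(B * (1 - x ^ 2)) + E * x * y) ^ 2| =
        (-(B * (1 - x ^ 2)) + E * x * y) ^ 2 := abs_of_nonneg (sq_nonneg _)
    rw [abs_div, hD2, Kc, ← hd0]
    exact div_le_div₀ (by positivity) e5 (pow_pos hd0pos 2) e6
  have hKc : 0 ≤ Kc A B E eps Y := by
    have h0 := key (hh A y) ⟨le_refl _, hh_le_one hA hε.le⟩
    exact le_trans (abs_nonneg _) h0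
  apply Convex.lipschitzOnWith_of_nnnorm_hasDerivWithin_le (convex_Icc _ _)
    (f' := fun x => ((-(2 * A * x) - y) * (-(B * (1 - x ^ 2)) + E * x * y) -
          (A * (1 - x ^ 2) - x * y) * (2 * B * x + E * y)) /
        (-(B * (1 - x ^ 2)) + E * x * y) ^ 2)
  · intro x hx
    exact (hasDerivAt_FF (ne_of_gt (denom_pos hA hB hBE hε hx.1))).hasDerivWithinAt
  · intro x hx
    rw [← NNReal.coe_le_coe, coe_nnnorm, Real.norm_eq_abs, Real.coe_toNNReal _ hKc]
    exact key x hx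

lemma lipschitz_pj (A y : ℝ) : LipschitzWith 1 (pj A y) := by
  have h := (LipschitzWith.id.min_const (1 : ℝ)).const_max (hh A y)
  show LipschitzWith 1 (fun x => max (hh A y) (min x 1))
  simpa [pj, Function.comp] using h

lemma lipschitzWith_vv (hA : 0 < A) (hB : 0 < B) (hE : 0 < E) (hBE : B < A * E)
    {eps Y y : ℝ} (heps : 0 < eps) (hy : y ∈ Icc eps Y) :
    LipschitzWith (Real.toNNReal (Kc A B E eps Y)) (vv A B E y) := by
  have hε : 0 < y := lt_of_lt_of_le heps hy.1
  have hF := lipschitzOnWith_FF hA hB hE hBE heps hy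
  have hcomp := hF.comp ((lipschitz_pj A y).lipschitzOnWith (s := univ))
    (fun x _ => ⟨hh_le_pj x y, pj_le_one hA hε.le x⟩)
  rw [← lipschitzOnWith_univ]
  have hvv : vv A B E y = (fun x => FF A B E x y) ∘ (pj A y) := rfl
  rw [hvv]
  simpa using hcomp

lemma continuous_pj (hA : 0 < A) (x : ℝ) : Continuous (fun t => pj A t x) :=
  (hh_cont hA).max continuous_const

lemma continuousOn_vv (hA : 0 < A) (hB : 0 < B) (hBE : B < A * E) (x : ℝ) :
    ContinuousOn (fun t => vv A B E t x) (Ioi 0) := by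
  have hp := continuous_pj hA x
  simp only [vv, FF]
  apply ContinuousOn.div
  · exact ((continuous_const.mul (continuous_const.sub (hp.pow 2))).sub
      (hp.mul continuous_id)).continuousOn
  · exact (((continuous_const.mul (continuous_const.sub (hp.pow 2))).neg).add
      ((continuous_const.mul hp).mul continuous_id)).continuousOn
  · intro t ht
    exact ne_of_gt (denom_pos hA hB hBE ht (hh_le_pj x t))

lemma continuousOn_FF_comp (hA : 0 < A) (hB : 0 < B) (hBE : B < A * E) {g : ℝ → ℝ} {s : Set ℝ}
    (hg : ContinuousOn g s) (hs : ∀ t ∈ s, 0 < t ∧ hh A t ≤ g t) :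
    ContinuousOn (fun t => FF A B E (g t) t) s := by
  simp only [FF]
  apply ContinuousOn.div
  · exact (continuousOn_const.mul (continuousOn_const.sub (hg.pow 2))).sub
      (hg.mul continuousOn_id)
  · exact ((continuousOn_const.mul (continuousOn_const.sub (hg.pow 2))).neg).add
      ((continuousOn_const.mul hg).mul continuousOn_id)
  · intro t ht
    exact ne_of_gt (denom_pos hA hB hBE (hs t ht).1 (hs t ht).2)

lemma continuousAt_FF (hA : 0 < A) (hB : 0 < B) (hBE : B < A * E) {x y : ℝ} (hy : 0 < y)
    (hx : hh A y ≤ x) : ContinuousAt (fun u => FF A B E u y) x := by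
  simp only [FF]
  apply ContinuousAt.div
  · fun_prop
  · fun_prop
  · exact ne_of_gt (denom_pos hA hB hBE hy hx)

lemma abs_FF_le (hA : 0 < A) (hB : 0 < B) (hBE : B < A * E) {x y : ℝ} (hy : 0 < y)
    (hx : hh A y ≤ x) (hx1 : x ≤ 1) : |FF A B E x y| ≤ A / (A * E - B) := by
  rw [abs_le]
  refine ⟨by simpa using FF_ge hA hB hBE hy hx hx1, le_trans (FF_nonpos hA hB hBE hy hx)
    (div_pos hA (by linarith)).le⟩

/-- Picard–Lindelöf existence for the clamped field on `[y₀, Y]`. -/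
lemma exists_sol (hA : 0 < A) (hB : 0 < B) (hE : 0 < E) (hBE : B < A * E)
    {y₀ Y : ℝ} (h0 : 0 < y₀) (hY : y₀ ≤ Y) :
    ∃ f : ℝ → ℝ, f y₀ = 1 ∧
      ∀ t ∈ Icc y₀ Y, HasDerivWithinAt f (vv A B E t (f t)) (Icc y₀ Y) t := by
  have hEB : 0 < A * E - B := by linarith
  have hM : 0 ≤ A / (A * E - B) := (div_pos hA hEB).le
  have hPL : IsPicardLindelof (fun t x => vv A B E t x) (⟨y₀, le_refl _, hY⟩ : Icc y₀ Y) (1 : ℝ)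
      (Real.toNNReal (A / (A * E - B) * (Y - y₀))) 0 (Real.toNNReal (A / (A * E - B)))
      (Real.toNNReal (Kc A B E y₀ Y)) := by
   constructor
   · intro t ht
     exact (lipschitzWith_vv hA hB hE hBE h0 ht).lipschitzOnWith
   · intro x _
     exact (continuousOn_vv hA hB hBE x).mono (fun t ht => lt_of_lt_of_le h0 ht.1)
   · intro t ht x _
     rw [Real.norm_eq_abs]
     exact le_trans (abs_vv_le hA hB hBE (lt_of_lt_of_le h0 ht.1) x) (Real.le_coe_toNNReal _)
   · show (Real.toNNReal (A / (A * E - B)) : ℝ) * max (Y - y₀) (y₀ - y₀) ≤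
       (Real.toNNReal (A / (A * E - B) * (Y - y₀)) : ℝ) - ((0 : NNReal) : ℝ)
     rw [Real.coe_toNNReal _ hM, Real.coe_toNNReal _ (mul_nonneg hM (by linarith)),
       max_eq_left (by linarith)]
     simp
  obtain ⟨f, hf1, hf⟩ := IsPicardLindelof.exists_eq_forall_mem_Icc_hasDerivWithinAt₀ hPL
  exact ⟨f, hf1, hf⟩

/-- Solutions of the clamped equation starting at `1` stay below `1`. -/
lemma sol_le_one (hA : 0 < A) (hB : 0 < B) (hE : 0 < E) (hBE : B < A * E)
    {y₀ Y : ℝ} (h0 : 0 < y₀) {f : ℝ → ℝ} (hf1 : f y₀ = 1)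
    (hf' : ∀ t ∈ Icc y₀ Y, HasDerivWithinAt f (vv A B E t (f t)) (Icc y₀ Y) t) :
    ∀ t ∈ Icc y₀ Y, f t ≤ 1 := by
  have hcont : ContinuousOn f (Icc y₀ Y) := fun t ht => (hf' t ht).continuousWithinAt
  by_contra hcon
  push_neg at hcon
  obtain ⟨d, hd, hfd⟩ := hcon
  set S := {t ∈ Icc y₀ d | f t ≤ 1} with hS
  have hSc : IsClosed S := by
    have h1 : ContinuousOn f (Icc y₀ d) := hcont.mono (Icc_subset_Icc le_rfl hd.2)
    exact h1.preimage_isClosed_of_isClosed isClosed_Icc isClosed_Iic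
  have hSne : S.Nonempty := ⟨y₀, ⟨le_refl _, hd.1⟩, le_of_eq hf1⟩
  have hSbdd : BddAbove S := ⟨d, fun t ht => ht.1.2⟩
  set c := sSup S with hc
  have hcS : c ∈ S := hSc.csSup_mem hSne hSbdd
  have hcd : c < d := by
    rcases lt_or_eq_of_le hcS.1.2 with h | h
    · exact h
    · exact absurd (h ▸ hcS.2) (not_le.mpr hfd)
  have hgt : ∀ t, c < t → t ≤ d → 1 < f t := by
    intro t hct htd
    by_contra hle
    push_neg at hle
    exact absurd (le_csSup hSbdd ⟨⟨le_trans hcS.1.1 hct.le, htd⟩, hle⟩) (not_le.mpr hct)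
  have hfc : f c = 1 := by
    refine le_antisymm hcS.2 ?_
    have hsub : Ioc c d ⊆ Icc y₀ Y := fun t ht =>
      ⟨le_trans hcS.1.1 ht.1.le, le_trans ht.2 hd.2⟩
    have hmem : Icc y₀ Y ∈ 𝓝[>] c := mem_of_superset
      (Ioc_mem_nhdsGT_of_mem ⟨le_refl _, hcd⟩) hsub
    have htend : Tendsto f (𝓝[>] c) (𝓝 (f c)) :=
      ((hcont c ⟨hcS.1.1, le_trans hcS.1.2 hd.2⟩).mono_left (nhdsWithin_le_of_mem hmem))
    refine ge_of_tendsto htend ?_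
    filter_upwards [Ioc_mem_nhdsGT_of_mem ⟨le_refl _, hcd⟩] with t ht
    exact (hgt t ht.1 ht.2).le
  -- on [c, d], f ≥ 1 and the derivative is -(1/E)
  have hkey : ∀ t ∈ Ico c d, HasDerivWithinAt (fun u => f u + u * (1 / E)) 0 (Ici t) t := by
    intro t ht
    have htI : t ∈ Icc y₀ Y := ⟨le_trans hcS.1.1 ht.1, le_trans ht.2.le hd.2⟩
    have ht0 : 0 < t := lt_of_lt_of_le h0 htI.1
    have hft : 1 ≤ f t := by
      rcases eq_or_lt_of_le ht.1 with h | h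
      · exact le_of_eq (h ▸ hfc).symm
      · exact (hgt t h ht.2.le).le
    have hval : vv A B E t (f t) = -(1 / E) := by
      rw [vv, pj_eq_one hA ht0.le hft, FF_one hE ht0]
    have hd1 : HasDerivWithinAt f (-(1 / E)) (Ici t) t := by
      have := (hf' t htI).mono_of_mem_nhdsWithin (Icc_mem_nhdsGE_of_mem
        ⟨htI.1, lt_of_lt_of_le ht.2 hd.2⟩)
      rwa [hval] at this
    have hd2 : HasDerivWithinAt (fun u : ℝ => u * (1 / E)) (1 / E) (Ici t) t := by
      simpa using ((hasDerivAt_id t).mul_const (1 / E)).hasDerivWithinAt (s := Ici t)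
    have := hd1.add hd2
    rw [neg_add_cancel] at this
    exact this
  have hconst := constant_of_has_deriv_right_zero
    (f := fun u => f u + u * (1 / E)) (a := c) (b := d)
    (((hcont.mono (Icc_subset_Icc hcS.1.1 hd.2))).add
      (Continuous.continuousOn (by fun_prop)))
    hkey d (right_mem_Icc.mpr hcd.le)
  have hE' : 0 < 1 / E := by positivity
  have : f d = f c + c * (1 / E) - d * (1 / E) := by linarith
  nlinarith
/-- Solutions of the clamped equation starting at `1` stay above `h`. -/
lemma hh_le_sol (hA : 0 < A) (hB : 0 < B) (hE : 0 < E) (hBE : B < A * E)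
    {y₀ Y : ℝ} (h0 : 0 < y₀) {f : ℝ → ℝ} (hf1 : f y₀ = 1)
    (hf' : ∀ t ∈ Icc y₀ Y, HasDerivWithinAt f (vv A B E t (f t)) (Icc y₀ Y) t) :
    ∀ t ∈ Icc y₀ Y, hh A t ≤ f t := by
  have hcont : ContinuousOn f (Icc y₀ Y) := fun t ht => (hf' t ht).continuousWithinAt
  by_contra hcon
  push_neg at hcon
  obtain ⟨d, hd, hfd⟩ := hcon
  set S := {t ∈ Icc y₀ d | hh A t ≤ f t} with hS
  have hSc : IsClosed S := by
    have h1 : ContinuousOn (fun t => f t - hh A t) (Icc y₀ d) :=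
      (hcont.mono (Icc_subset_Icc le_rfl hd.2)).sub (hh_cont hA).continuousOn
    have : S = Icc y₀ d ∩ (fun t => f t - hh A t) ⁻¹' (Ici 0) := by
      ext t
      simp [hS, sub_nonneg]
    rw [this]
    exact h1.preimage_isClosed_of_isClosed isClosed_Icc isClosed_Ici
  have hSne : S.Nonempty :=
    ⟨y₀, ⟨le_refl _, hd.1⟩, by rw [hf1]; exact hh_le_one hA h0.le⟩
  have hSbdd : BddAbove S := ⟨d, fun t ht => ht.1.2⟩
  set c := sSup S with hc
  have hcS : c ∈ S := hSc.csSup_mem hSne hSbdd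
  have hcd : c < d := by
    rcases lt_or_eq_of_le hcS.1.2 with h | h
    · exact h
    · exact absurd (h ▸ hcS.2) (not_le.mpr hfd)
  have h0c : 0 < c := lt_of_lt_of_le h0 hcS.1.1
  have hgt : ∀ t, c < t → t ≤ d → f t < hh A t := by
    intro t hct htd
    by_contra hle
    push_neg at hle
    exact absurd (le_csSup hSbdd ⟨⟨le_trans hcS.1.1 hct.le, htd⟩, hle⟩) (not_le.mpr hct)
  have hfc : f c = hh A c := by
    refine le_antisymm ?_ hcS.2
    have hsub : Ioc c d ⊆ Icc y₀ Y := fun t ht =>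
      ⟨le_trans hcS.1.1 ht.1.le, le_trans ht.2 hd.2⟩
    have hmem : Icc y₀ Y ∈ 𝓝[>] c := mem_of_superset
      (Ioc_mem_nhdsGT_of_mem ⟨le_refl _, hcd⟩) hsub
    have htend : Tendsto (fun t => f t - hh A t) (𝓝[>] c) (𝓝 (f c - hh A c)) := by
      refine Tendsto.sub ?_ ?_
      · exact (hcont c ⟨hcS.1.1, le_trans hcS.1.2 hd.2⟩).mono_left (nhdsWithin_le_of_mem hmem)
      · exact ((hh_cont hA).tendsto c).mono_left nhdsWithin_le_nhds
    have hle : f c - hh A c ≤ 0 := by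
      refine le_of_tendsto htend ?_
      filter_upwards [Ioc_mem_nhdsGT_of_mem ⟨le_refl _, hcd⟩] with t ht
      exact sub_nonpos.mpr (hgt t ht.1 ht.2).le
    linarith
  -- on [c, d], f ≤ h and the derivative is 0, so f is constant there
  have hkey : ∀ t ∈ Ico c d, HasDerivWithinAt f 0 (Ici t) t := by
    intro t ht
    have htI : t ∈ Icc y₀ Y := ⟨le_trans hcS.1.1 ht.1, le_trans ht.2.le hd.2⟩
    have ht0 : 0 < t := lt_of_lt_of_le h0 htI.1
    have hft : f t ≤ hh A t := by
      rcases eq_or_lt_of_le ht.1 with h | h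
      · exact le_of_eq (h ▸ hfc)
      · exact (hgt t h ht.2.le).le
    have hval : vv A B E t (f t) = 0 := by
      rw [vv, pj_eq_hh hA ht0.le hft, FF_hh hA]
    have hd1 := (hf' t htI).mono_of_mem_nhdsWithin (Icc_mem_nhdsGE_of_mem
      ⟨htI.1, lt_of_lt_of_le ht.2 hd.2⟩)
    rwa [hval] at hd1
  have hconst := constant_of_has_deriv_right_zero (f := f) (a := c) (b := d)
    (hcont.mono (Icc_subset_Icc hcS.1.1 hd.2)) hkey d (right_mem_Icc.mpr hcd.le)
  have hha : hh A d < hh A c := hh_anti hA h0c.le hcd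
  rw [hconst, hfc] at hfd
  linarith
/-- Uniqueness of solutions of the clamped ODE. -/
lemma sol_unique (hA : 0 < A) (hB : 0 < B) (hE : 0 < E) (hBE : B < A * E)
    {c d : ℝ} (hc : 0 < c) {f g : ℝ → ℝ}
    (hf : ContinuousOn f (Icc c d)) (hg : ContinuousOn g (Icc c d))
    (hf' : ∀ t ∈ Ico c d, HasDerivWithinAt f (vv A B E t (f t)) (Ici t) t)
    (hg' : ∀ t ∈ Ico c d, HasDerivWithinAt g (vv A B E t (g t)) (Ici t) t)
    (hfg : f c = g c) : EqOn f g (Icc c d) := by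
  rcases lt_or_ge d c with hcd | hcd
  · intro t ht
    exact absurd (ht.1.trans ht.2) (not_le.mpr hcd)
  set w : ℝ → ℝ → ℝ := fun t x => vv A B E (max c (min t d)) x with hw
  have hvK : ∀ t : ℝ, LipschitzOnWith (Real.toNNReal (Kc A B E c d)) (w t)
      ((fun _ : ℝ => (univ : Set ℝ)) t) := by
    intro t
    have hmem : max c (min t d) ∈ Icc c d := ⟨le_max_left _ _, max_le hcd (min_le_right _ _)⟩
    exact fun _x _hx _y _hy => lipschitzWith_vv hA hB hE hBE hc hmem _ _
  have hfd : ∀ t ∈ Ico c d, HasDerivWithinAt f (w t (f t)) (Ici t) t := by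
    intro t ht
    have : w t (f t) = vv A B E t (f t) := by
      rw [hw]
      simp only [min_eq_left ht.2.le, max_eq_right ht.1]
    rw [this]
    exact hf' t ht
  have hgd : ∀ t ∈ Ico c d, HasDerivWithinAt g (w t (g t)) (Ici t) t := by
    intro t ht
    have : w t (g t) = vv A B E t (g t) := by
      rw [hw]
      simp only [min_eq_left ht.2.le, max_eq_right ht.1]
    rw [this]
    exact hg' t ht
  exact ODE_solution_unique_of_mem_Icc_right (fun t _ => hvK t) hf hfd (fun t _ => mem_univ _)
    hg hgd (fun t _ => mem_univ _) hfg

/-- Comparison: solutions of the clamped ODE preserve order. -/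
lemma sol_le_sol (hA : 0 < A) (hB : 0 < B) (hE : 0 < E) (hBE : B < A * E)
    {c d : ℝ} (hc : 0 < c) {f g : ℝ → ℝ}
    (hf : ContinuousOn f (Icc c d)) (hg : ContinuousOn g (Icc c d))
    (hf' : ∀ t ∈ Ico c d, HasDerivWithinAt f (vv A B E t (f t)) (Ici t) t)
    (hg' : ∀ t ∈ Ico c d, HasDerivWithinAt g (vv A B E t (g t)) (Ici t) t)
    (hfg : f c ≤ g c) : ∀ t ∈ Icc c d, f t ≤ g t := by
  by_contra hcon
  push_neg at hcon
  obtain ⟨d', hd', hgtd⟩ := hcon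
  set S := {t ∈ Icc c d' | f t ≤ g t} with hS
  have hSc : IsClosed S := by
    have h1 : ContinuousOn (fun t => g t - f t) (Icc c d') :=
      (hg.mono (Icc_subset_Icc le_rfl hd'.2)).sub (hf.mono (Icc_subset_Icc le_rfl hd'.2))
    have : S = Icc c d' ∩ (fun t => g t - f t) ⁻¹' (Ici 0) := by
      ext t
      simp [hS, sub_nonneg]
    rw [this]
    exact h1.preimage_isClosed_of_isClosed isClosed_Icc isClosed_Ici
  have hSne : S.Nonempty := ⟨c, ⟨le_refl _, hd'.1⟩, hfg⟩
  have hSbdd : BddAbove S := ⟨d', fun t ht => ht.1.2⟩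
  set σ := sSup S with hσ
  have hσS : σ ∈ S := hSc.csSup_mem hSne hSbdd
  have hσd : σ < d' := by
    rcases lt_or_eq_of_le hσS.1.2 with h | h
    · exact h
    · exact absurd (h ▸ hσS.2) (not_le.mpr hgtd)
  have hgt : ∀ t, σ < t → t ≤ d' → g t < f t := by
    intro t hct htd
    by_contra hle
    push_neg at hle
    exact absurd (le_csSup hSbdd ⟨⟨le_trans hσS.1.1 hct.le, htd⟩, hle⟩) (not_le.mpr hct)
  have hfσ : f σ = g σ := by
    refine le_antisymm hσS.2 ?_
    have hmem : Icc c d ∈ 𝓝[>] σ := mem_of_superset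
      (Ioc_mem_nhdsGT_of_mem ⟨le_refl _, hσd⟩)
      (fun t ht => ⟨le_trans hσS.1.1 ht.1.le, le_trans ht.2 hd'.2⟩)
    have hσI : σ ∈ Icc c d := ⟨hσS.1.1, le_trans hσS.1.2 hd'.2⟩
    have htend : Tendsto (fun t => f t - g t) (𝓝[>] σ) (𝓝 (f σ - g σ)) := by
      refine Tendsto.sub ?_ ?_
      · exact (hf σ hσI).mono_left (nhdsWithin_le_of_mem hmem)
      · exact (hg σ hσI).mono_left (nhdsWithin_le_of_mem hmem)
    have hle : 0 ≤ f σ - g σ := by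
      refine ge_of_tendsto htend ?_
      filter_upwards [Ioc_mem_nhdsGT_of_mem ⟨le_refl _, hσd⟩] with t ht
      exact sub_nonneg.mpr (hgt t ht.1 ht.2).le
    linarith
  have hσ0 : 0 < σ := lt_of_lt_of_le hc hσS.1.1
  have hsub : Icc σ d' ⊆ Icc c d := Icc_subset_Icc hσS.1.1 hd'.2
  have hsub' : Ico σ d' ⊆ Ico c d := Ico_subset_Ico hσS.1.1 hd'.2
  have heq := sol_unique hA hB hE hBE hσ0 (hf.mono hsub) (hg.mono hsub)
    (fun t ht => hf' t (hsub' ht)) (fun t ht => hg' t (hsub' ht)) hfσ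
  have := heq (right_mem_Icc.mpr hσd.le)
  rw [this] at hgtd
  exact absurd hgtd (lt_irrefl _)
/-- Global solution on `[y₀, ∞)` of the clamped ODE with value `1` at `y₀`,
trapped in the region. -/
lemma exists_glob (hA : 0 < A) (hB : 0 < B) (hE : 0 < E) (hBE : B < A * E)
    {y₀ : ℝ} (h0 : 0 < y₀) :
    ∃ f : ℝ → ℝ, f y₀ = 1 ∧
      (∀ Y, ∀ t ∈ Icc y₀ Y, HasDerivWithinAt f (vv A B E t (f t)) (Icc y₀ Y) t) ∧
      (∀ t, y₀ ≤ t → hh A t ≤ f t ∧ f t ≤ 1) := by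
  have hub : ∀ Y : ℝ, y₀ ≤ max Y y₀ + 1 := fun Y => by
    have := le_max_right Y y₀; linarith
  have hub2 : ∀ Y : ℝ, Y ≤ max Y y₀ + 1 := fun Y => by
    have := le_max_left Y y₀; linarith
  have hex : ∀ Y : ℝ, ∃ f : ℝ → ℝ, f y₀ = 1 ∧ ∀ t ∈ Icc y₀ (max Y y₀ + 1),
      HasDerivWithinAt f (vv A B E t (f t)) (Icc y₀ (max Y y₀ + 1)) t :=
    fun Y => exists_sol hA hB hE hBE h0 (hub Y)
  choose sol hsol1 hsol2 using hex
  have hcont : ∀ Y : ℝ, ContinuousOn (sol Y) (Icc y₀ (max Y y₀ + 1)) :=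
    fun Y t ht => ((hsol2 Y) t ht).continuousWithinAt
  have hIci : ∀ Y : ℝ, ∀ t ∈ Ico y₀ (max Y y₀ + 1),
      HasDerivWithinAt (sol Y) (vv A B E t (sol Y t)) (Ici t) t := fun Y t ht =>
    (hsol2 Y t (Ico_subset_Icc_self ht)).mono_of_mem_nhdsWithin (Icc_mem_nhdsGE_of_mem ht)
  have hagree : ∀ Y₁ Y₂ : ℝ, ∀ t, y₀ ≤ t → t ≤ max Y₁ y₀ + 1 → t ≤ max Y₂ y₀ + 1 →
      sol Y₁ t = sol Y₂ t := by
    intro Y₁ Y₂ t ht h1 h2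
    set d := min (max Y₁ y₀ + 1) (max Y₂ y₀ + 1) with hd
    have hs1 : Icc y₀ d ⊆ Icc y₀ (max Y₁ y₀ + 1) := Icc_subset_Icc le_rfl (min_le_left _ _)
    have hs2 : Icc y₀ d ⊆ Icc y₀ (max Y₂ y₀ + 1) := Icc_subset_Icc le_rfl (min_le_right _ _)
    exact sol_unique hA hB hE hBE h0 ((hcont Y₁).mono hs1) ((hcont Y₂).mono hs2)
      (fun u hu => hIci Y₁ u ⟨hu.1, lt_of_lt_of_le hu.2 (min_le_left _ _)⟩)
      (fun u hu => hIci Y₂ u ⟨hu.1, lt_of_lt_of_le hu.2 (min_le_right _ _)⟩)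
      (by rw [hsol1 Y₁, hsol1 Y₂]) ⟨ht, le_min h1 h2⟩
  refine ⟨fun t => sol t t, hsol1 y₀, ?_, ?_⟩
  · intro Y t ht
    have htY : y₀ ≤ Y := le_trans ht.1 ht.2
    have hEq : ∀ u ∈ Icc y₀ Y, sol u u = sol Y u := by
      intro u hu
      exact hagree u Y u hu.1 (by have := le_max_left u y₀; linarith)
        (le_trans hu.2 (hub2 Y))
    have hder : HasDerivWithinAt (sol Y) (vv A B E t (sol Y t)) (Icc y₀ Y) t :=
      (hsol2 Y t ⟨ht.1, le_trans ht.2 (hub2 Y)⟩).mono (Icc_subset_Icc le_rfl (hub2 Y))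
    have hcongr := hder.congr hEq (hEq t ht)
    have hval : vv A B E t (sol t t) = vv A B E t (sol Y t) := by rw [hEq t ht]
    rw [hval]
    exact hcongr
  · intro t ht
    have htm : t ∈ Icc y₀ (max t y₀ + 1) := ⟨ht, by have := le_max_left t y₀; linarith⟩
    exact ⟨hh_le_sol hA hB hE hBE h0 (hsol1 t) (hsol2 t) t htm,
      sol_le_one hA hB hE hBE h0 (hsol1 t) (hsol2 t) t htm⟩
/-- The main abstract theorem. -/
theorem abstract_main (hA : 0 < A) (hB : 0 < B) (hE : 0 < E) (hBE : B < A * E) :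
    ∃ x : ℝ → ℝ, (∀ y, 0 < y → HasDerivAt x (FF A B E (x y) y) y) ∧
      (∀ y, 0 < y → hh A y ≤ x y ∧ x y ≤ 1) ∧
      Tendsto x (𝓝[>] (0:ℝ)) (𝓝 1) := by
  have hEB : 0 < A * E - B := by linarith
  set M : ℝ := A / (A * E - B) with hMdef
  have hM0 : 0 < M := div_pos hA hEB
  -- the family of solutions starting at `1` at time `y₀`
  have hex : ∀ y₀ : ℝ, ∃ f : ℝ → ℝ, 0 < y₀ → (f y₀ = 1 ∧
      (∀ Y, ∀ t ∈ Icc y₀ Y, HasDerivWithinAt f (vv A B E t (f t)) (Icc y₀ Y) t) ∧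
      (∀ t, y₀ ≤ t → hh A t ≤ f t ∧ f t ≤ 1)) := by
    intro y₀
    by_cases h : 0 < y₀
    · obtain ⟨f, hf⟩ := exists_glob hA hB hE hBE h
      exact ⟨f, fun _ => hf⟩
    · exact ⟨fun _ => 1, fun h' => absurd h' h⟩
  choose Φ hΦ using hex
  have hΦ1 : ∀ {y₀ : ℝ}, 0 < y₀ → Φ y₀ y₀ = 1 := fun h => (hΦ _ h).1
  have hΦd : ∀ {y₀ : ℝ}, 0 < y₀ → ∀ Y, ∀ t ∈ Icc y₀ Y,
      HasDerivWithinAt (Φ y₀) (vv A B E t (Φ y₀ t)) (Icc y₀ Y) t := fun h => (hΦ _ h).2.1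
  have hΦr : ∀ {y₀ : ℝ}, 0 < y₀ → ∀ t, y₀ ≤ t → hh A t ≤ Φ y₀ t ∧ Φ y₀ t ≤ 1 :=
    fun h => (hΦ _ h).2.2
  have hΦc : ∀ {y₀ : ℝ}, 0 < y₀ → ∀ Y, ContinuousOn (Φ y₀) (Icc y₀ Y) :=
    fun h Y t ht => (hΦd h Y t ht).continuousWithinAt
  have hΦi : ∀ {y₀ : ℝ}, 0 < y₀ → ∀ {c d : ℝ}, y₀ ≤ c → ∀ t ∈ Ico c d,
      HasDerivWithinAt (Φ y₀) (vv A B E t (Φ y₀ t)) (Ici t) t := by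
    intro y₀ h c d hc t ht
    exact (hΦd h d t ⟨le_trans hc ht.1, ht.2.le⟩).mono_of_mem_nhdsWithin
      (Icc_mem_nhdsGE_of_mem ⟨le_trans hc ht.1, ht.2⟩)
  have hΦha : ∀ {y₀ t : ℝ}, 0 < y₀ → y₀ < t →
      HasDerivAt (Φ y₀) (FF A B E (Φ y₀ t) t) t := by
    intro y₀ t h hlt
    have h1 := hΦd h (t + 1) t ⟨hlt.le, by linarith⟩
    have h2 : HasDerivAt (Φ y₀) (vv A B E t (Φ y₀ t)) t :=
      h1.hasDerivAt (Icc_mem_nhds hlt (by linarith))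
    have hr := hΦr h t hlt.le
    rwa [vv_eq_FF hr.1 hr.2] at h2
  have hmono : ∀ {α β : ℝ}, 0 < α → α ≤ β → ∀ t, β ≤ t → Φ α t ≤ Φ β t := by
    intro α β hα hαβ t ht
    have hβ : 0 < β := lt_of_lt_of_le hα hαβ
    refine sol_le_sol hA hB hE hBE hβ ((hΦc hα t).mono (Icc_subset_Icc hαβ le_rfl))
      (hΦc hβ t) (fun u hu => hΦi hα hαβ u hu) (fun u hu => hΦi hβ le_rfl u hu) ?_ t
      (right_mem_Icc.mpr ht)
    rw [hΦ1 hβ]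
    exact (hΦr hα β hαβ).2
  have hΦint : ∀ {y₀ c d : ℝ}, 0 < y₀ → y₀ < c → c ≤ d →
      Φ y₀ d = Φ y₀ c + ∫ t in c..d, FF A B E (Φ y₀ t) t := by
    intro y₀ c d h hc hcd
    have hc0 : 0 < c := lt_trans h hc
    have hder : ∀ t ∈ uIcc c d, HasDerivAt (Φ y₀) (FF A B E (Φ y₀ t) t) t := by
      intro t ht
      rw [uIcc_of_le hcd] at ht
      exact hΦha h (lt_of_lt_of_le hc ht.1)
    have hcont2 : ContinuousOn (fun t => FF A B E (Φ y₀ t) t) (uIcc c d) := by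
      rw [uIcc_of_le hcd]
      refine continuousOn_FF_comp hA hB hBE ((hΦc h d).mono (Icc_subset_Icc hc.le le_rfl)) ?_
      intro t ht
      exact ⟨lt_of_lt_of_le hc0 ht.1, (hΦr h t (le_trans hc.le ht.1)).1⟩
    have := intervalIntegral.integral_eq_sub_of_hasDerivAt hder hcont2.intervalIntegrable
    linarith [this]
  -- the limiting solution
  set xb : ℝ → ℝ := fun y => sInf ((fun y₀ => Φ y₀ y) '' (Ioc 0 y)) with hxbdef
  have hne : ∀ {y : ℝ}, 0 < y → ((fun y₀ => Φ y₀ y) '' (Ioc 0 y)).Nonempty :=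
    fun {y} hy => ⟨_, ⟨y, ⟨hy, le_rfl⟩, rfl⟩⟩
  have hbdd : ∀ {y : ℝ}, 0 < y → ∀ z ∈ (fun y₀ => Φ y₀ y) '' (Ioc 0 y), hh A y ≤ z := by
    rintro y hy z ⟨y₀, hy₀, rfl⟩
    exact (hΦr hy₀.1 y hy₀.2).1
  have hbddB : ∀ {y : ℝ}, 0 < y → BddBelow ((fun y₀ => Φ y₀ y) '' (Ioc 0 y)) :=
    fun hy => ⟨hh A _, hbdd hy⟩
  have hxbge : ∀ {y : ℝ}, 0 < y → hh A y ≤ xb y := fun hy => le_csInf (hne hy) (hbdd hy)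
  have hxble : ∀ {y y₀ : ℝ}, 0 < y₀ → y₀ ≤ y → xb y ≤ Φ y₀ y :=
    fun h hle => csInf_le (hbddB (lt_of_lt_of_le h hle)) ⟨_, ⟨h, hle⟩, rfl⟩
  have hxble1 : ∀ {y : ℝ}, 0 < y → xb y ≤ 1 :=
    fun hy => le_trans (hxble hy le_rfl) (le_of_eq (hΦ1 hy))
  have hlim : ∀ {y : ℝ}, 0 < y → Tendsto (fun s => Φ s y) (𝓝[>] (0:ℝ)) (𝓝 (xb y)) := by
    intro y hy
    rw [Metric.tendsto_nhdsWithin_nhds]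
    intro ε hε
    obtain ⟨z, ⟨s₀, hs₀, rfl⟩, hz⟩ := (csInf_lt_iff (hbddB hy) (hne hy)).mp
      (show xb y < xb y + ε by linarith)
    refine ⟨s₀, hs₀.1, ?_⟩
    intro s hs hds
    have hs0 : 0 < s := hs
    rw [Real.dist_eq, sub_zero, abs_of_pos hs0] at hds
    have hup : Φ s y ≤ Φ s₀ y := hmono hs0 hds.le y hs₀.2
    have hlow : xb y ≤ Φ s y := hxble hs0 (le_trans hds.le hs₀.2)
    rw [Real.dist_eq, abs_lt]
    constructor <;> linarith
  have hxint : ∀ {c d : ℝ}, 0 < c → c ≤ d →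
      xb d = xb c + ∫ t in c..d, FF A B E (xb t) t := by
    intro c d hc hcd
    have hd : 0 < d := lt_of_lt_of_le hc hcd
    have hev : ∀ᶠ s in 𝓝[>] (0:ℝ), Φ s d = Φ s c + ∫ t in c..d, FF A B E (Φ s t) t := by
      filter_upwards [Ioo_mem_nhdsGT_of_mem ⟨le_refl (0:ℝ), hc⟩] with s hs
      exact hΦint hs.1 hs.2 hcd
    have hint : Tendsto (fun s => ∫ t in c..d, FF A B E (Φ s t) t) (𝓝[>] (0:ℝ))
        (𝓝 (∫ t in c..d, FF A B E (xb t) t)) := by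
      apply intervalIntegral.tendsto_integral_filter_of_dominated_convergence
        (bound := fun _ => M)
      · filter_upwards [Ioo_mem_nhdsGT_of_mem ⟨le_refl (0:ℝ), hc⟩] with s hs
        apply ContinuousOn.aestronglyMeasurable ?_ measurableSet_uIoc
        refine continuousOn_FF_comp hA hB hBE ((hΦc hs.1 d).mono ?_) ?_
        · rw [uIoc_of_le hcd]
          exact fun t ht => ⟨le_trans hs.2.le ht.1.le, ht.2⟩
        · rw [uIoc_of_le hcd]
          intro t ht
          exact ⟨lt_trans hc ht.1, (hΦr hs.1 t (le_trans hs.2.le ht.1.le)).1⟩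
      · filter_upwards [Ioo_mem_nhdsGT_of_mem ⟨le_refl (0:ℝ), hc⟩] with s hs
        apply MeasureTheory.ae_of_all
        intro t ht
        rw [uIoc_of_le hcd] at ht
        have ht0 : 0 < t := lt_trans hc ht.1
        have hr := hΦr hs.1 t (le_trans hs.2.le ht.1.le)
        rw [Real.norm_eq_abs]
        exact abs_FF_le hA hB hBE ht0 hr.1 hr.2
      · exact intervalIntegrable_const
      · apply MeasureTheory.ae_of_all
        intro t ht
        rw [uIoc_of_le hcd] at ht
        have ht0 : 0 < t := lt_trans hc ht.1
        exact ((continuousAt_FF hA hB hBE ht0 (hxbge ht0)).tendsto).comp (hlim ht0)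
    have h1 : Tendsto (fun s => Φ s d) (𝓝[>] (0:ℝ)) (𝓝 (xb d)) := hlim hd
    have h2 : Tendsto (fun s => Φ s c + ∫ t in c..d, FF A B E (Φ s t) t) (𝓝[>] (0:ℝ))
        (𝓝 (xb c + ∫ t in c..d, FF A B E (xb t) t)) := (hlim hc).add hint
    exact tendsto_nhds_unique h1 (h2.congr' (hev.mono fun s hs => hs.symm))
  -- Lipschitz estimate and continuity for `xb`
  have hxlip : ∀ {c d : ℝ}, 0 < c → c ≤ d → |xb d - xb c| ≤ M * |d - c| := by
    intro c d hc hcd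
    have h1 : xb d - xb c = ∫ t in c..d, FF A B E (xb t) t := by
      rw [hxint hc hcd]; ring
    rw [h1]
    have h2 := intervalIntegral.norm_integral_le_of_norm_le_const
      (C := M) (f := fun t => FF A B E (xb t) t) (a := c) (b := d) ?_
    · simpa [Real.norm_eq_abs, abs_sub_comm d c] using h2
    · intro t ht
      rw [uIoc_of_le hcd] at ht
      have ht0 : 0 < t := lt_trans hc ht.1
      rw [Real.norm_eq_abs]
      exact abs_FF_le hA hB hBE ht0 (hxbge ht0) (hxble1 ht0)
  have hxcont : ContinuousOn xb (Ioi 0) := by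
    intro y hy
    have hy0 : 0 < y := hy
    apply ContinuousAt.continuousWithinAt
    rw [Metric.continuousAt_iff]
    intro ε hε
    refine ⟨min (y / 2) (ε / (M + 1)), by positivity, ?_⟩
    intro u hu
    rw [Real.dist_eq] at hu
    have hu1 : |u - y| < y / 2 := lt_of_lt_of_le hu (min_le_left _ _)
    have hu2 : |u - y| < ε / (M + 1) := lt_of_lt_of_le hu (min_le_right _ _)
    have hu0 : 0 < u := by
      rw [abs_lt] at hu1
      linarith
    have key : |xb u - xb y| ≤ M * |u - y| := by
      rcases le_or_gt u y with h | h
      · have := hxlip hu0 h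
        rwa [abs_sub_comm, abs_sub_comm u y]
      · exact hxlip hy0 h.le
    rw [Real.dist_eq]
    have k1 : M * |u - y| ≤ M * (ε / (M + 1)) := mul_le_mul_of_nonneg_left hu2.le hM0.le
    have k2 : M * (ε / (M + 1)) < (M + 1) * (ε / (M + 1)) :=
      mul_lt_mul_of_pos_right (by linarith) (by positivity)
    have k3 : (M + 1) * (ε / (M + 1)) = ε := by field_simp
    linarith
  -- conclusion
  have hGcont : ContinuousOn (fun t => FF A B E (xb t) t) (Ioi 0) :=
    continuousOn_FF_comp hA hB hBE hxcont (fun t ht => ⟨ht, hxbge ht⟩)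
  refine ⟨xb, ?_, fun y hy => ⟨hxbge hy, hxble1 hy⟩, ?_⟩
  · intro y hy
    set c : ℝ := y / 2 with hcdef
    have hc : 0 < c := by positivity
    have hcy : c < y := by rw [hcdef]; linarith
    have hint : IntervalIntegrable (fun t => FF A B E (xb t) t) MeasureTheory.volume c y := by
      apply ContinuousOn.intervalIntegrable
      apply hGcont.mono
      rw [uIcc_of_le hcy.le]
      exact fun t ht => lt_of_lt_of_le hc ht.1
    have hmeas : StronglyMeasurableAtFilter (fun t => FF A B E (xb t) t) (𝓝 y) :=
      hGcont.stronglyMeasurableAtFilter isOpen_Ioi y hy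
    have hCA : ContinuousAt (fun t => FF A B E (xb t) t) y :=
      hGcont.continuousAt (Ioi_mem_nhds hy)
    have hD := intervalIntegral.integral_hasDerivAt_right hint hmeas hCA
    have hD2 : HasDerivAt (fun u => xb c + ∫ t in c..u, FF A B E (xb t) t)
        (FF A B E (xb y) y) y := hD.const_add (xb c)
    have hevEq : xb =ᶠ[𝓝 y] (fun u => xb c + ∫ t in c..u, FF A B E (xb t) t) := by
      filter_upwards [Ioi_mem_nhds hcy] with u hu
      exact hxint hc (le_of_lt hu)
    exact hD2.congr_of_eventuallyEq hevEq
  · have h1 : Tendsto (hh A) (𝓝[>] (0:ℝ)) (𝓝 1) := by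
      have h2 := (hh_cont hA).tendsto 0
      rw [hh_zero hA] at h2
      exact h2.mono_left nhdsWithin_le_nhds
    apply tendsto_of_tendsto_of_tendsto_of_le_of_le' h1 tendsto_const_nhds
    · filter_upwards [self_mem_nhdsWithin] with y hy
      exact hxbge hy
    · filter_upwards [self_mem_nhdsWithin] with y hy
      exact hxble1 hy
end Einstein

/-- There is a solution `x̄` of `x' = F(x, ·)` on `(0, ∞)`, trapped between `h` and `1`,
with `x̄(y) → 1` as `y → 0⁺`. -/
theorem exists_limit_solution (n : ℕ) (hn : 3 ≤ n) (m ρ : ℝ) (hm : m = (n : ℝ) - 1)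
    (hρ : ρ < 1 / (2 * m)) :
    ∃ x : ℝ → ℝ,
      (∀ y > (0 : ℝ), HasDerivAt x (einsteinF m ρ (x y) y) y) ∧
      (∀ y > (0 : ℝ), einsteinH m ρ y ≤ x y ∧ x y ≤ 1) ∧
      Filter.Tendsto x (nhdsWithin 0 (Set.Ioi 0)) (nhds 1) := by
  have hm2 : 2 ≤ m := by
    rw [hm]
    have : (3 : ℝ) ≤ (n : ℝ) := by exact_mod_cast hn
    linarith
  have hmpos : 0 < m := by linarith
  have h2m : 0 < 2 * m := by linarith
  have h2mρ : 2 * m * ρ < 1 := by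
    have := (lt_div_iff₀ h2m).mp hρ
    linarith
  set A : ℝ := (m - 1) * (1 - m * ρ) with hAdef
  set B : ℝ := m * (m - 1) * (1 - (m + 1) * ρ) with hBdef
  set E : ℝ := 1 + m - 4 * m * ρ with hEdef
  have hmρ : m * ρ < 1 / 2 := by linarith
  have hA : 0 < A := by
    rw [hAdef]
    have h1 : 0 < m - 1 := by linarith
    have h2 : 0 < 1 - m * ρ := by linarith
    positivity
  have hB : 0 < B := by
    rw [hBdef]
    have h2 : 0 < 1 - (m + 1) * ρ := by
      rcases le_or_gt ρ 0 with h | h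
      · nlinarith
      · nlinarith
    have h1 : 0 < m - 1 := by linarith
    positivity
  have hE : 0 < E := by
    rw [hEdef]
    linarith
  have hBE : B < A * E := by
    have key : A * E - B = (m - 1) * (1 - 2 * m * ρ) ^ 2 := by
      rw [hAdef, hBdef, hEdef]
      ring
    nlinarith [sq_nonneg (1 - 2 * m * ρ), mul_pos (show (0:ℝ) < m - 1 by linarith)
      (pow_pos (show (0:ℝ) < 1 - 2 * m * ρ by linarith) 2)]
  obtain ⟨x, hx1, hx2, hx3⟩ := Einstein.abstract_main hA hB hE hBE
  have hFeq : ∀ u y : ℝ, einsteinF m ρ u y = Einstein.FF A B E u y := by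
    intro u y
    rw [einsteinF, Einstein.FF, hAdef, hBdef, hEdef]
  have hHeq : ∀ y : ℝ, einsteinH m ρ y = Einstein.hh A y := by
    intro y
    rw [einsteinH, Einstein.hh, Einstein.ss, hAdef]
    rw [show y ^ 2 + 4 * (m - 1) ^ 2 * (1 - m * ρ) ^ 2 =
      y ^ 2 + 4 * ((m - 1) * (1 - m * ρ)) ^ 2 by ring]
    rw [show 2 * (m - 1) * (1 - m * ρ) = 2 * ((m - 1) * (1 - m * ρ)) by ring]
  refine ⟨x, ?_, ?_, hx3⟩
  · intro y hy
    rw [hFeq]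
    exact hx1 y hy
  · intro y hy
    rw [hHeq]
    exact hx2 y hy
end
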